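/- arXiv:2402.07747 — 3 statements merged into one kernel-verified Lean document; each statement's English description precedes it below -/
import Mathlib

section
/- Let p be an everywhere positive, continuously differentiable probability density on ℝ^d whose score s = ∇ log p is L-Lipschitz, and for h > 0 let p_h be the density of p * N(0, h I_d). Then for every y ∈ ℝ^d, p(y)/p_h(y) ≤ exp(d L h / 2). -/
open MeasureTheory Real
open scoped RealInnerProductSpace ENNReal

noncomputable section

abbrev Vec (d : ℕ) := EuclideanSpace ℝ (Fin d)

/-- Density at `x` of the Gaussian `N(c, h I_d)` on `ℝ^d`. -/
def gaussD (d : ℕ) (h : ℝ) (c x : Vec d) : ℝ :=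
  (2 * π * h) ^ (-(d : ℝ) / 2) * Real.exp (-‖x - c‖ ^ 2 / (2 * h))

/-- Density of `μ * N(0, h I_d)` for a measure `μ`. -/
def convD (d : ℕ) (μ : Measure (Vec d)) (h : ℝ) (x : Vec d) : ℝ :=
  ∫ u, gaussD d h u x ∂μ

/-- Density of `p * N(0, h I_d)` for a density function `p`. -/
def densConvD (d : ℕ) (p : Vec d → ℝ) (h : ℝ) (y : Vec d) : ℝ :=
  ∫ z, p (y - z) * gaussD d h 0 z

/-- Density of the Gaussian mixture `(1/n) ∑ᵢ N(Xᵢ, h I_d)`. -/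
def mixD (d n : ℕ) (X : Fin n → Vec d) (h : ℝ) (x : Vec d) : ℝ :=
  (n : ℝ)⁻¹ * ∑ i, gaussD d h (X i) x

/-- Score function `∇ log f`. -/
def scoreFn (d : ℕ) (f : Vec d → ℝ) (x : Vec d) : Vec d :=
  gradient (fun y => Real.log (f y)) x

/-- Regularized score `∇f / max(f, ε)`. -/
def regScore (d : ℕ) (f : Vec d → ℝ) (ε : ℝ) (x : Vec d) : Vec d :=
  (max (f x) ε)⁻¹ • gradient f x

/-- Score matching loss `∫ ‖s₁ - s₂‖² f`. -/
def scoreLoss (d : ℕ) (s₁ s₂ : Vec d → Vec d) (f : Vec d → ℝ) : ℝ :=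
  ∫ x, ‖s₁ x - s₂ x‖ ^ 2 * f x

/-- Squared Hellinger distance between densities. -/
def hellSq (d : ℕ) (p q : Vec d → ℝ) : ℝ :=
  ∫ x, (Real.sqrt (p x) - Real.sqrt (q x)) ^ 2

/-- Mean vector of a measure. -/
def meanVec (d : ℕ) (μ : Measure (Vec d)) : Vec d :=
  ∫ y, y ∂μ

/-- `μ` is `α`-subgaussian: `E[exp⟨θ, X - E X⟩] ≤ exp(α²‖θ‖²/2)` for all `θ`. -/
def IsSubgaussianMeasure (d : ℕ) (μ : Measure (Vec d)) (α : ℝ) : Prop :=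
  ∀ θ : Vec d, ∫ x, Real.exp ⟪θ, x - meanVec d μ⟫ ∂μ ≤ Real.exp (α ^ 2 * ‖θ‖ ^ 2 / 2)

/-- Quadratic form of the Hessian of `g` at `x` applied to `v`. -/
def hessQ (d : ℕ) (g : Vec d → ℝ) (x v : Vec d) : ℝ :=
  iteratedFDeriv ℝ 2 g x ![v, v]


variable {h : ℝ}

def g1 (h x : ℝ) : ℝ := (2*π*h) ^ (-(1:ℝ)/2) * exp (-x^2/(2*h))

variable {h : ℝ}

lemma gauss_sq_integral {b : ℝ} (hb : 0 < b) :
    ∫ x : ℝ, x^2 * exp (-b * x^2) = (1/(2*b)) * Real.sqrt (π / b) := by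
  have hf : ∀ x : ℝ, HasDerivAt (fun x : ℝ => x * exp (-b*x^2))
      (exp (-b*x^2) - 2*b*(x^2 * exp (-b*x^2))) x := by
    intro x
    have h1 : HasDerivAt (fun x : ℝ => -b*x^2) (-b*(2*x)) x := by
      simpa using ((hasDerivAt_pow 2 x).const_mul (-b))
    have h2 := (h1.exp)
    have := (hasDerivAt_id x).fun_mul h2
    simp only [id] at this
    refine this.congr_deriv ?_
    ring
  have hint : Integrable (fun x : ℝ => exp (-b*x^2) - 2*b*(x^2 * exp (-b*x^2))) := by
    apply (integrable_exp_neg_mul_sq hb).sub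
    have : Integrable (fun x : ℝ => x^2 * exp (-b*x^2)) := by
      have := integrable_rpow_mul_exp_neg_mul_sq hb (by norm_num : (-1:ℝ) < 2)
      refine this.congr ?_
      filter_upwards [] with x
      rw [show ((2:ℝ)) = ((2:ℕ):ℝ) by norm_num, Real.rpow_natCast]
    exact (this.const_mul _)
  have hf_int : Integrable (fun x : ℝ => x * exp (-b*x^2)) := integrable_mul_exp_neg_mul_sq hb
  have hzero := integral_eq_zero_of_hasDerivAt_of_integrable hf hint hf_int
  have hsq : Integrable (fun x : ℝ => x^2 * exp (-b*x^2)) := by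
    have := integrable_rpow_mul_exp_neg_mul_sq hb (by norm_num : (-1:ℝ) < 2)
    refine this.congr ?_
    filter_upwards [] with x
    rw [show ((2:ℝ)) = ((2:ℕ):ℝ) by norm_num, Real.rpow_natCast]
  rw [integral_sub (integrable_exp_neg_mul_sq hb) (hsq.const_mul _), integral_const_mul,
    integral_gaussian] at hzero
  have h2b : (2*b) ≠ 0 := by positivity
  field_simp at hzero ⊢
  linarith [hzero]

lemma exp_shift (hh : 0 < h) (t x : ℝ) :
    exp (t*x) * g1 h x
      = ((2*π*h) ^ (-(1:ℝ)/2) * exp (t^2*h/2)) * exp (-(1/(2*h)) * (x - t*h)^2) := by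
  conv_rhs => rw [mul_assoc, ← Real.exp_add]
  conv_lhs => rw [g1, mul_left_comm, ← Real.exp_add]
  congr 2
  field_simp
  ring

lemma g1_sq_integrable_aux (hh : 0 < h) : Integrable (fun x : ℝ => x^2 * exp (-(1/(2*h)) * x^2)) := by
  have := integrable_rpow_mul_exp_neg_mul_sq (b := 1/(2*h)) (by positivity) (s := 2) (by norm_num)
  refine this.congr ?_
  filter_upwards [] with x
  rw [show ((2:ℝ)) = ((2:ℕ):ℝ) by norm_num, Real.rpow_natCast]

lemma exp_neg_eq (hh : 0 < h) : ∀ x : ℝ, exp (-x^2/(2*h)) = exp (-(1/(2*h)) * x^2) := by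
  intro x; congr 1; field_simp

lemma g1_norm_const (hh : 0 < h) : (2*π*h) ^ (-(1:ℝ)/2) * Real.sqrt (π / (1/(2*h))) = 1 := by
  have h2 : (0:ℝ) < 2*π*h := by positivity
  rw [show π / (1/(2*h)) = 2*π*h by field_simp, sqrt_eq_rpow, ← Real.rpow_add h2]
  norm_num

lemma g1_integral (hh : 0 < h) : ∫ x : ℝ, g1 h x = 1 := by
  simp_rw [g1, exp_neg_eq hh, integral_const_mul, integral_gaussian]
  exact g1_norm_const hh

lemma g1_integrable (hh : 0 < h) : Integrable (g1 h) := by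
  unfold g1; simp_rw [exp_neg_eq hh]
  exact (integrable_exp_neg_mul_sq (by positivity)).const_mul _

lemma g1_sq_rw (hh : 0 < h) : (fun x : ℝ => x^2 * g1 h x)
    = fun x => (2*π*h) ^ (-(1:ℝ)/2) * (x^2 * exp (-(1/(2*h)) * x^2)) :=
  funext fun x => by rw [g1, exp_neg_eq hh]; ring

lemma g1_sq_integral (hh : 0 < h) : ∫ x : ℝ, x^2 * g1 h x = h := by
  rw [show (∫ x : ℝ, x^2 * g1 h x) = ∫ x : ℝ, (2*π*h) ^ (-(1:ℝ)/2) * (x^2 * exp (-(1/(2*h)) * x^2))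
    from congrArg _ (g1_sq_rw hh),
    integral_const_mul, gauss_sq_integral (b := 1/(2*h)) (by positivity)]
  rw [← mul_assoc, mul_comm ((2*π*h) ^ (-(1:ℝ)/2)), mul_assoc, g1_norm_const hh]
  field_simp

lemma g1_sq_integrable (hh : 0 < h) : Integrable (fun x : ℝ => x^2 * g1 h x) := by
  rw [g1_sq_rw hh]
  exact (g1_sq_integrable_aux hh).const_mul _

lemma g1_mgf_integrable (hh : 0 < h) (t : ℝ) : Integrable (fun x : ℝ => exp (t*x) * g1 h x) := by
  simp_rw [exp_shift hh t]
  have hb : (0:ℝ) < 1/(2*h) := by positivity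
  exact ((integrable_exp_neg_mul_sq hb).comp_sub_right (t*h)).const_mul _


-- ===== transfer =====
lemma vec_integral_eq (d : ℕ) (F : (Fin d → ℝ) → ℝ) :
    ∫ z : Vec d, F (fun i => z i) = ∫ x : Fin d → ℝ, F x :=
  (((EuclideanSpace.volume_preserving_symm_measurableEquiv_toLp (Fin d)).symm
      _).integral_comp'
      (fun z : Vec d => F (fun i => z i))).symm

lemma vec_integrable_iff (d : ℕ) (F : (Fin d → ℝ) → ℝ) :
    Integrable (fun z : Vec d => F (fun i => z i)) ↔ Integrable F := by
  rw [← ((EuclideanSpace.volume_preserving_symm_measurableEquiv_toLp (Fin d)).symm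
    _).integrable_comp_emb
    (MeasurableEquiv.measurableEmbedding _)]
  exact Iff.rfl

lemma gaussD_prod (d : ℕ) (hh : 0 < h) (z : Vec d) :
    gaussD d h 0 z = ∏ i, g1 h (z i) := by
  have h2 : (0:ℝ) < 2*π*h := by positivity
  have hn : ‖z - 0‖^2 = ∑ i, (z i)^2 := by
    rw [sub_zero, EuclideanSpace.norm_eq, Real.sq_sqrt (by positivity)]
    simp [sq_abs]
  rw [gaussD, hn]
  simp only [g1]
  rw [Finset.prod_mul_distrib]
  congr 1
  · rw [Finset.prod_const, ← Real.rpow_natCast ((2*π*h) ^ (-(1:ℝ)/2)) (Finset.univ.card),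
      ← Real.rpow_mul h2.le]
    simp [Finset.card_univ]
    ring_nf
  · rw [← Real.exp_sum]
    congr 1
    rw [← Finset.sum_div, Finset.sum_neg_distrib, neg_div]

lemma gaussD_nonneg (d : ℕ) (hh : 0 < h) (z : Vec d) : 0 ≤ gaussD d h 0 z := by
  have h2 : (0:ℝ) < 2*π*h := by positivity
  unfold gaussD
  positivity

lemma gaussD_continuous (d : ℕ) : Continuous (gaussD d h 0) := by
  unfold gaussD
  fun_prop

lemma vec_one (d : ℕ) (hh : 0 < h) : ∫ z : Vec d, gaussD d h 0 z = 1 := by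
  rw [show (fun z : Vec d => gaussD d h 0 z) = fun z : Vec d => ∏ i, g1 h (z i) from
    funext (gaussD_prod d hh)]
  rw [vec_integral_eq d (fun x => ∏ i, g1 h (x i)),
    volume_pi, integral_fintype_prod_eq_prod (f := fun _ : Fin d => g1 h), g1_integral hh]
  simp

lemma vec_int (d : ℕ) (hh : 0 < h) : Integrable (gaussD d h 0) := by
  rw [show gaussD d h 0 = fun z : Vec d => ∏ i, g1 h (z i) from funext (gaussD_prod d hh)]
  exact (vec_integrable_iff d (fun x => ∏ i, g1 h (x i))).2
    (Integrable.fintype_prod (fun _ => g1_integrable hh))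

-- second moment
def Fj (h : ℝ) {d : ℕ} (j i : Fin d) (x : ℝ) : ℝ := (if i = j then x^2 else 1) * g1 h x

lemma vec_sq_rw (d : ℕ) (hh : 0 < h) (z : Vec d) :
    ‖z‖^2 * gaussD d h 0 z = ∑ j, ∏ i, Fj h j i (z i) := by
  have hn : ‖z‖^2 = ∑ j, (z j)^2 := by
    rw [EuclideanSpace.norm_eq, Real.sq_sqrt (by positivity)]
    simp [sq_abs]
  rw [hn, gaussD_prod d hh, Finset.sum_mul]
  refine Finset.sum_congr rfl fun j _ => ?_
  unfold Fj
  rw [Finset.prod_mul_distrib, Finset.prod_ite_eq' Finset.univ j (fun i => (z i)^2)]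
  simp

lemma Fj_integrable (d : ℕ) (hh : 0 < h) (j i : Fin d) : Integrable (Fj h j i) := by
  unfold Fj
  by_cases hij : i = j
  · simp only [hij, if_pos rfl]
    exact g1_sq_integrable hh
  · simp only [if_neg hij, one_mul]
    exact g1_integrable hh

lemma Fj_integral (d : ℕ) (hh : 0 < h) (j i : Fin d) :
    ∫ x : ℝ, Fj h j i x = if i = j then h else 1 := by
  unfold Fj
  by_cases hij : i = j
  · simp only [hij, if_pos rfl]
    exact g1_sq_integral hh
  · simp only [if_neg hij, one_mul]
    exact g1_integral hh

lemma vec_sq (d : ℕ) (hh : 0 < h) :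
    ∫ z : Vec d, ‖z‖^2 * gaussD d h 0 z = d * h := by
  rw [show (fun z : Vec d => ‖z‖^2 * gaussD d h 0 z)
      = fun z : Vec d => ∑ j, ∏ i, Fj h j i (z i) from funext (vec_sq_rw d hh)]
  rw [vec_integral_eq d (fun x => ∑ j, ∏ i, Fj h j i (x i)),
    volume_pi, integral_finset_sum _ (fun j _ => Integrable.fintype_prod (fun i => Fj_integrable d hh j i)),
    ← volume_pi]
  have : ∀ j : Fin d, (∫ x : Fin d → ℝ, ∏ i, Fj h j i (x i)) = h := by
    intro j
    rw [volume_pi, integral_fintype_prod_eq_prod (f := fun i => Fj h j i)]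
    simp_rw [Fj_integral d hh]
    rw [Finset.prod_ite_eq' Finset.univ j (fun _ => h)]
    simp
  simp [this]

lemma vec_sq_int (d : ℕ) (hh : 0 < h) :
    Integrable (fun z : Vec d => ‖z‖^2 * gaussD d h 0 z) := by
  rw [show (fun z : Vec d => ‖z‖^2 * gaussD d h 0 z)
      = fun z : Vec d => ∑ j, ∏ i, Fj h j i (z i) from funext (vec_sq_rw d hh)]
  exact (vec_integrable_iff d (fun x => ∑ j, ∏ i, Fj h j i (x i))).2
    (integrable_finset_sum _ (fun j _ => Integrable.fintype_prod (fun i => Fj_integrable d hh j i)))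

lemma gaussD_neg (d : ℕ) (z : Vec d) : gaussD d h 0 (-z) = gaussD d h 0 z := by
  unfold gaussD
  rw [sub_zero, sub_zero, norm_neg]

lemma vec_mean (d : ℕ) (a : Vec d) :
    ∫ z : Vec d, ⟪a, z⟫ * gaussD d h 0 z = 0 := by
  have key := integral_neg_eq_self (fun z : Vec d => ⟪a, z⟫ * gaussD d h 0 z) volume
  simp only [inner_neg_right, gaussD_neg, neg_mul, integral_neg] at key
  linarith

lemma vec_mean_int (d : ℕ) (hh : 0 < h) (a : Vec d) :
    Integrable (fun z : Vec d => ⟪a, z⟫ * gaussD d h 0 z) := by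
  have hg : Integrable (fun z : Vec d => ‖a‖ * (gaussD d h 0 z + ‖z‖^2 * gaussD d h 0 z)) :=
    ((vec_int d hh).add (vec_sq_int d hh)).const_mul _
  refine hg.mono ?_ ?_
  · exact ((continuous_const.inner continuous_id).mul (gaussD_continuous d)).aestronglyMeasurable
  · filter_upwards [] with z
    have hq := gaussD_nonneg d hh z
    have h1 : |⟪a, z⟫| ≤ ‖a‖ * ‖z‖ := abs_real_inner_le_norm a z
    have h2 : ‖z‖ ≤ 1 + ‖z‖^2 := by nlinarith [norm_nonneg z, sq_nonneg (‖z‖ - 1)]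
    have h3 : (0:ℝ) ≤ ‖a‖ := norm_nonneg a
    have hrhs : (0:ℝ) ≤ ‖a‖ * (gaussD d h 0 z + ‖z‖^2 * gaussD d h 0 z) :=
      mul_nonneg h3 (add_nonneg hq (mul_nonneg (sq_nonneg _) hq))
    simp only [norm_mul, Real.norm_eq_abs]
    rw [abs_of_nonneg hq, abs_norm, abs_of_nonneg (add_nonneg hq (mul_nonneg (sq_nonneg _) hq))]
    calc |⟪a, z⟫| * gaussD d h 0 z ≤ (‖a‖ * ‖z‖) * gaussD d h 0 z :=
        mul_le_mul_of_nonneg_right h1 hq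
      _ ≤ (‖a‖ * (1 + ‖z‖^2)) * gaussD d h 0 z := by nlinarith
      _ = ‖a‖ * (gaussD d h 0 z + ‖z‖^2 * gaussD d h 0 z) := by ring

lemma inner_eq_sum (d : ℕ) (a z : Vec d) : ⟪a, z⟫ = ∑ i, a i * z i := by
  simp [PiLp.inner_apply, RCLike.inner_apply, conj_trivial, mul_comm]

lemma vec_mgf_int (d : ℕ) (hh : 0 < h) (b : Vec d) :
    Integrable (fun z : Vec d => Real.exp ⟪b, z⟫ * gaussD d h 0 z) := by
  have hrw : ∀ z : Vec d, Real.exp ⟪b, z⟫ * gaussD d h 0 z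
      = ∏ i, Real.exp (b i * z i) * g1 h (z i) := by
    intro z
    rw [inner_eq_sum, Real.exp_sum, gaussD_prod d hh, ← Finset.prod_mul_distrib]
  rw [show (fun z : Vec d => Real.exp ⟪b, z⟫ * gaussD d h 0 z)
      = fun z : Vec d => ∏ i, Real.exp (b i * z i) * g1 h (z i) from funext hrw]
  exact (vec_integrable_iff d (fun x => ∏ i, Real.exp (b i * x i) * g1 h (x i))).2
    (Integrable.fintype_prod (fun i => g1_mgf_integrable hh (b i)))



lemma taylor_bound (d : ℕ) (p : Vec d → ℝ) (L : ℝ)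
    (hpos : ∀ x, 0 < p x) (hC1 : ContDiff ℝ 1 p)
    (hL : 0 ≤ L) (hlip : LipschitzWith L.toNNReal (scoreFn d p)) (y z : Vec d) :
    p y * Real.exp (-⟪scoreFn d p y, z⟫ - L * ‖z‖^2 / 2) ≤ p (y - z) := by
  set f : Vec d → ℝ := fun x => Real.log (p x) with hf
  set s : Vec d → Vec d := scoreFn d p with hs
  have hdiff : ∀ x, DifferentiableAt ℝ f x :=
    fun x => ((hC1.differentiable one_ne_zero) x).log (hpos x).ne'
  have hgrad : ∀ x, HasFDerivAt f ((InnerProductSpace.toDual ℝ (Vec d)) (s x)) x := by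
    intro x
    have h1 : HasGradientAt f (gradient f x) x := (hdiff x).hasGradientAt
    rw [hasGradientAt_iff_hasFDerivAt] at h1
    exact h1
  set v : Vec d := -z with hv
  have hcurve : ∀ t : ℝ, HasDerivAt (fun t : ℝ => y + t • v) v t := by
    intro t
    simpa using (((hasDerivAt_id t).smul_const v).const_add y)
  set φ : ℝ → ℝ := fun t => f (y + t • v) with hφ
  have hφd : ∀ t : ℝ, HasDerivAt φ ⟪s (y + t • v), v⟫ t := by
    intro t
    have := (hgrad (y + t • v)).comp_hasDerivAt t (hcurve t)
    simp [InnerProductSpace.toDual_apply_apply] at this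
    exact this
  set ψ : ℝ → ℝ := fun t => φ t - φ 0 - t * ⟪s y, v⟫ + L * ‖v‖^2 * t^2 / 2 with hψ
  have hψd : ∀ t : ℝ, HasDerivAt ψ (⟪s (y + t • v), v⟫ - ⟪s y, v⟫ + L * ‖v‖^2 * t) t := by
    intro t
    have h1 : HasDerivAt (fun t : ℝ => t * ⟪s y, v⟫) ⟪s y, v⟫ t := by
      simpa using (hasDerivAt_id t).mul_const (⟪s y, v⟫)
    have h2 : HasDerivAt (fun t : ℝ => L * ‖v‖^2 * t^2 / 2) (L * ‖v‖^2 * t) t := by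
      have := ((hasDerivAt_pow 2 t).const_mul (L * ‖v‖^2)).div_const 2
      refine this.congr_deriv ?_
      ring
    have := (((hφd t).sub_const (φ 0)).sub h1).add h2
    exact this
  have hmono : MonotoneOn ψ (Set.Icc 0 1) := by
    apply monotoneOn_of_deriv_nonneg (convex_Icc 0 1)
    · exact fun t _ => ((hψd t).continuousAt).continuousWithinAt
    · intro t _
      exact ((hψd t).differentiableAt).differentiableWithinAt
    · intro t ht
      rw [interior_Icc] at ht
      rw [(hψd t).deriv]
      have hlip' : ‖s (y + t • v) - s y‖ ≤ L * (t * ‖v‖) := by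
        have := hlip.dist_le_mul (y + t • v) y
        rw [dist_eq_norm] at this
        rw [dist_eq_norm] at this
        calc ‖s (y + t • v) - s y‖ ≤ L.toNNReal * ‖y + t • v - y‖ := this
          _ = L * (t * ‖v‖) := by
              rw [Real.coe_toNNReal L hL, add_sub_cancel_left, norm_smul]
              simp [abs_of_pos ht.1]
      have hinner : -(‖s (y + t • v) - s y‖ * ‖v‖) ≤ ⟪s (y + t • v) - s y, v⟫ :=
        neg_le_of_abs_le (abs_real_inner_le_norm _ _)
      have : ⟪s (y + t • v), v⟫ - ⟪s y, v⟫ = ⟪s (y + t • v) - s y, v⟫ := by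
        rw [inner_sub_left]
      rw [this]
      nlinarith [norm_nonneg v, norm_nonneg (s (y + t • v) - s y), hinner, ht.1.le]
  have hψ1 : (0:ℝ) ≤ ψ 1 := by
    have h0 : ψ 0 = 0 := by simp [hψ]
    have := hmono (Set.mem_Icc.2 ⟨le_rfl, zero_le_one⟩) (Set.mem_Icc.2 ⟨zero_le_one, le_rfl⟩)
      zero_le_one
    rw [h0] at this
    exact this
  -- unfold ψ 1
  have key : f y + ⟪s y, v⟫ - L * ‖v‖^2 / 2 ≤ f (y + v) := by
    simp only [hψ, hφ, one_smul, one_pow, mul_one, one_mul, zero_smul, add_zero] at hψ1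
    linarith
  have hyv : y + v = y - z := by rw [hv]; abel
  rw [hyv] at key
  have hinner_neg : ⟪s y, v⟫ = -⟪s y, z⟫ := by rw [hv, inner_neg_right]
  have hnv : ‖v‖ = ‖z‖ := by rw [hv, norm_neg]
  rw [hinner_neg, hnv] at key
  calc p y * Real.exp (-⟪s y, z⟫ - L * ‖z‖^2 / 2)
      = Real.exp (f y + (-⟪s y, z⟫ - L * ‖z‖^2 / 2)) := by
        rw [Real.exp_add, Real.exp_log (hpos y)]
    _ ≤ Real.exp (f (y - z)) := by
        apply Real.exp_le_exp.2
        linarith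
    _ = p (y - z) := Real.exp_log (hpos (y - z))



lemma gaussD_le (d : ℕ) (hh : 0 < h) (z : Vec d) :
    gaussD d h 0 z ≤ (2 * π * h) ^ (-(d:ℝ)/2) := by
  have h2 : (0:ℝ) < 2*π*h := by positivity
  unfold gaussD
  nth_rewrite 2 [show (2*π*h) ^ (-(d:ℝ)/2) = (2*π*h) ^ (-(d:ℝ)/2) * 1 by ring]
  apply mul_le_mul_of_nonneg_left _ (by positivity)
  rw [show (1:ℝ) = Real.exp 0 by simp]
  apply Real.exp_le_exp.2
  have : (0:ℝ) ≤ ‖z - 0‖^2 := sq_nonneg _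
  have : (0:ℝ) < 2*h := by positivity
  apply div_nonpos_of_nonpos_of_nonneg <;> [skip; linarith]
  simpa using sq_nonneg ‖z - 0‖


/-- Pointwise bound on the ratio of a density with Lipschitz score
to its Gaussian smoothing: `p(y)/p_h(y) ≤ exp(dLh/2)`. -/
theorem density_ratio_bound (d : ℕ) (hd : 1 ≤ d) (p : Vec d → ℝ) (L h : ℝ)
    (hpos : ∀ x, 0 < p x) (hC1 : ContDiff ℝ 1 p) (hint : ∫ x, p x = 1)
    (hL : 0 ≤ L) (hlip : LipschitzWith L.toNNReal (scoreFn d p)) (hh : 0 < h) :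
    ∀ y : Vec d, p y / densConvD d p h y ≤ Real.exp ((d : ℝ) * L * h / 2) := by
  intro y
  set a : Vec d := scoreFn d p y with ha
  set G : Vec d → ℝ := fun z => -⟪a, z⟫ - L * ‖z‖^2 / 2 with hG
  set m : ℝ := -((d:ℝ) * L * h) / 2 with hmdef
  have hp_int : Integrable p := by
    by_contra hni
    rw [integral_undef hni] at hint; norm_num at hint
  have hq_nonneg : ∀ z, 0 ≤ gaussD d h 0 z := gaussD_nonneg d hh
  have hIq : Integrable (gaussD d h 0) := vec_int d hh
  have hIsq : Integrable (fun z : Vec d => ‖z‖^2 * gaussD d h 0 z) := vec_sq_int d hh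
  have hIinner : Integrable (fun z : Vec d => ⟪a, z⟫ * gaussD d h 0 z) := vec_mean_int d hh a
  have hGrw : (fun z : Vec d => G z * gaussD d h 0 z)
      = fun z => (-1 : ℝ) * (⟪a,z⟫ * gaussD d h 0 z) + (-(L/2)) * (‖z‖^2 * gaussD d h 0 z) := by
    funext z; simp only [hG]; ring
  have hGq_int : Integrable (fun z : Vec d => G z * gaussD d h 0 z) := by
    rw [hGrw]; exact ((hIinner.const_mul _).add (hIsq.const_mul _))
  have hm : ∫ z : Vec d, G z * gaussD d h 0 z = m := by
    rw [hGrw, integral_add (hIinner.const_mul _) (hIsq.const_mul _),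
      integral_const_mul, integral_const_mul, vec_mean d a, vec_sq d hh, hmdef]
    ring
  -- integrability of exp(G) * q
  have hGcont : Continuous G := by
    apply Continuous.sub
    · exact (continuous_const.inner continuous_id).neg
    · fun_prop
  have hIexp : Integrable (fun z : Vec d => Real.exp (G z) * gaussD d h 0 z) := by
    refine (vec_mgf_int d hh (-a)).mono
      ((hGcont.rexp.mul (gaussD_continuous d)).aestronglyMeasurable) ?_
    filter_upwards [] with z
    have hq := hq_nonneg z
    have h1 : G z ≤ ⟪-a, z⟫ := by
      rw [inner_neg_left]
      have : 0 ≤ L * ‖z‖^2 / 2 := by positivity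
      simp only [hG]; linarith
    simp only [norm_mul, Real.norm_eq_abs, abs_of_nonneg hq, abs_of_nonneg (Real.exp_nonneg _)]
    exact mul_le_mul_of_nonneg_right (Real.exp_le_exp.2 h1) hq
  -- tangent line Jensen
  have tangent : ∀ z : Vec d, Real.exp m * (1 + (G z - m)) * gaussD d h 0 z
      ≤ Real.exp (G z) * gaussD d h 0 z := by
    intro z
    apply mul_le_mul_of_nonneg_right _ (hq_nonneg z)
    have h1 : (G z - m) + 1 ≤ Real.exp (G z - m) := Real.add_one_le_exp _
    calc Real.exp m * (1 + (G z - m)) ≤ Real.exp m * Real.exp (G z - m) :=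
        mul_le_mul_of_nonneg_left (by linarith) (Real.exp_nonneg m)
      _ = Real.exp (G z) := by rw [← Real.exp_add]; ring_nf
  have hlow_rw : (fun z : Vec d => Real.exp m * (1 + (G z - m)) * gaussD d h 0 z)
      = fun z => (Real.exp m * (1 - m)) * gaussD d h 0 z
          + Real.exp m * (G z * gaussD d h 0 z) := by
    funext z; ring
  have hIlow : Integrable (fun z : Vec d => Real.exp m * (1 + (G z - m)) * gaussD d h 0 z) := by
    rw [hlow_rw]; exact ((hIq.const_mul _).add (hGq_int.const_mul _))
  have hJensen : Real.exp m ≤ ∫ z : Vec d, Real.exp (G z) * gaussD d h 0 z := by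
    have hle := integral_mono hIlow hIexp tangent
    have heq : ∫ z : Vec d, Real.exp m * (1 + (G z - m)) * gaussD d h 0 z = Real.exp m := by
      rw [hlow_rw, integral_add (hIq.const_mul _) (hGq_int.const_mul _),
        integral_const_mul, integral_const_mul, vec_one d hh, hm]
      ring
    linarith
  -- Taylor pointwise
  have htay : ∀ z : Vec d, p y * Real.exp (G z) * gaussD d h 0 z
      ≤ p (y - z) * gaussD d h 0 z := by
    intro z
    have := taylor_bound d p L hpos hC1 hL hlip y z
    calc p y * Real.exp (G z) * gaussD d h 0 z
        = (p y * Real.exp (-⟪a, z⟫ - L * ‖z‖^2 / 2)) * gaussD d h 0 z := by rw [hG]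
      _ ≤ p (y - z) * gaussD d h 0 z := mul_le_mul_of_nonneg_right this (hq_nonneg z)
  -- the convolution integrand is integrable
  have hD_int : Integrable (fun z : Vec d => p (y - z) * gaussD d h 0 z) := by
    have hps : Integrable (fun z : Vec d => p (y - z)) :=
      (integrable_comp_sub_left p y).2 hp_int
    refine (hps.const_mul ((2 * π * h) ^ (-(d:ℝ)/2))).mono
      (((hC1.continuous.comp (continuous_const.sub continuous_id)).mul
        (gaussD_continuous d)).aestronglyMeasurable) ?_
    filter_upwards [] with z
    have hq := hq_nonneg z
    have hpz := (hpos (y - z)).le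
    have hC : (0:ℝ) ≤ (2 * π * h) ^ (-(d:ℝ)/2) := by positivity
    simp only [norm_mul, Real.norm_eq_abs, abs_of_nonneg hq, abs_of_nonneg hpz,
      abs_of_nonneg hC]
    rw [mul_comm ((2 * π * h) ^ (-(d:ℝ)/2))]
    exact mul_le_mul_of_nonneg_left (gaussD_le d hh z) hpz
  have hIexp' : Integrable (fun z : Vec d => p y * Real.exp (G z) * gaussD d h 0 z) := by
    simpa [mul_assoc] using hIexp.const_mul (p y)
  have hmain : p y * Real.exp m ≤ densConvD d p h y := by
    calc p y * Real.exp m ≤ p y * ∫ z : Vec d, Real.exp (G z) * gaussD d h 0 z :=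
        mul_le_mul_of_nonneg_left hJensen (hpos y).le
      _ = ∫ z : Vec d, p y * Real.exp (G z) * gaussD d h 0 z := by
          rw [← integral_const_mul]
          congr 1; funext z; ring
      _ ≤ ∫ z : Vec d, p (y - z) * gaussD d h 0 z := integral_mono hIexp' hD_int htay
      _ = densConvD d p h y := rfl
  have hDpos : 0 < densConvD d p h y :=
    lt_of_lt_of_le (mul_pos (hpos y) (Real.exp_pos m)) hmain
  rw [div_le_iff₀ hDpos]
  have hexp : Real.exp m * Real.exp ((d:ℝ) * L * h / 2) = 1 := by
    rw [← Real.exp_add, hmdef, show -((d:ℝ)*L*h)/2 + (d:ℝ)*L*h/2 = 0 by ring, Real.exp_zero]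
  calc p y = p y * (Real.exp m * Real.exp ((d:ℝ) * L * h / 2)) := by rw [hexp, mul_one]
    _ = (p y * Real.exp m) * Real.exp ((d:ℝ) * L * h / 2) := by ring
    _ ≤ densConvD d p h y * Real.exp ((d:ℝ) * L * h / 2) :=
        mul_le_mul_of_nonneg_right hmain (Real.exp_nonneg _)
    _ = Real.exp ((d:ℝ) * L * h / 2) * densConvD d p h y := mul_comm _ _
end
end

section
/- Let ρ be a probability density on ℝ^d with finite second moment such that ρ(x) ∝ e^{−f(x)} with f twice continuously differentiable and ∇²f(x) ⪯ L I_d for all x ∈ ℝ^d (equivalently, −∇² log ρ(x) ⪯ L I_d for all x). Then the covariance matrix of ρ satisfies Cov_ρ(X) ⪰ (1/L) I_d. -/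
open MeasureTheory Real
open scoped RealInnerProductSpace ENNReal

noncomputable section

section AuxBL
open Filter


/-- Along a line: `∫ (G')² q ≤ L ∫ q` where `q = c·exp(-G)` is integrable and `G'' ≤ L`. -/
private lemma lineLemma1 {L c : ℝ} (hL : 0 < L) (hc : 0 < c)
    {G G' G'' : ℝ → ℝ}
    (hG' : ∀ t, HasDerivAt G (G' t) t)
    (hG'' : ∀ t, HasDerivAt G' (G'' t) t)
    (hcG'' : Continuous G'')
    (hGL : ∀ t, G'' t ≤ L)
    (hq : Integrable (fun t => c * Real.exp (-G t))) :
    Integrable (fun t => (G' t)^2 * (c * Real.exp (-G t))) ∧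
      ∫ t, (G' t)^2 * (c * Real.exp (-G t)) ≤ L * ∫ t, c * Real.exp (-G t) := by
  set q : ℝ → ℝ := fun t => c * Real.exp (-G t) with hqdef
  have hqpos : ∀ t, 0 < q t := fun t => mul_pos hc (Real.exp_pos _)
  have hdiffG' : Differentiable ℝ G' := fun t => (hG'' t).differentiableAt
  have hcontG' : Continuous G' := hdiffG'.continuous
  have hdiffG : Differentiable ℝ G := fun t => (hG' t).differentiableAt
  have hcontG : Continuous G := hdiffG.continuous
  have hcontq : Continuous q := continuous_const.mul (hcontG.neg.rexp)
  have hq' : ∀ t, HasDerivAt q (-(G' t * q t)) t := by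
    intro t
    have h1 : HasDerivAt (fun s => Real.exp (-G s)) (Real.exp (-G t) * (-G' t)) t :=
      ((hG' t).neg).exp
    have h2 := h1.const_mul c
    refine h2.congr_deriv ?_
    simp only [hqdef]
    ring
  set F : ℝ → ℝ := fun t => G' t * q t with hFdef
  have hF : ∀ t, HasDerivAt F (G'' t * q t - (G' t)^2 * q t) t := by
    intro t
    have := (hG'' t).mul (hq' t)
    refine this.congr_deriv ?_
    ring
  have hcontF : Continuous F := hcontG'.mul hcontq
  have hcontF' : Continuous (fun t => G'' t * q t - (G' t)^2 * q t) :=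
    (hcG''.mul hcontq).sub ((hcontG'.pow 2).mul hcontq)
  have hIqnn : (0:ℝ) ≤ ∫ t, q t := integral_nonneg (fun t => (hqpos t).le)
  -- from linear growth of q, contradiction with integrability
  have growth : ∀ ε > (0:ℝ), ∀ t₀ : ℝ, (∀ s, t₀ ≤ s → q t₀ + ε * (s - t₀) ≤ q s) → False := by
    intro ε hε t₀ key
    obtain ⟨n, hn⟩ := exists_nat_gt ((∫ t, q t) / ε)
    have hεn : (∫ t, q t) < ε * n := by
      rw [div_lt_iff₀ hε] at hn; linarith
    have hlow : ∀ s ∈ Set.Ioc (t₀ + n) (t₀ + n + 1), (ε * n : ℝ) ≤ q s := by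
      intro s hs
      have h1 : t₀ ≤ s := by have := hs.1; have : (0:ℝ) ≤ n := Nat.cast_nonneg n; linarith [hs.1]
      have h2 := key s h1
      have h3 : (n:ℝ) ≤ s - t₀ := by have := hs.1; linarith
      nlinarith [hqpos t₀, hε]
    have h8 : (ε * n) * ((volume (Set.Ioc (t₀ + n) (t₀ + n + 1))).toReal) ≤
        ∫ s in Set.Ioc (t₀ + (n:ℝ)) (t₀ + n + 1), q s := by
      apply setIntegral_ge_of_const_le_real measurableSet_Ioc
        (by simp [Real.volume_Ioc])
        hlow (hq.integrableOn)
    rw [Real.volume_Ioc, show t₀ + (n:ℝ) + 1 - (t₀ + n) = 1 from by ring] at h8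
    simp at h8
    have h9 : ∫ s in Set.Ioc (t₀ + (n:ℝ)) (t₀ + n + 1), q s ≤ ∫ t, q t :=
      setIntegral_le_integral hq (Eventually.of_forall (fun t => (hqpos t).le))
    linarith
  have growth_left : ∀ ε > (0:ℝ), ∀ t₀ : ℝ, (∀ s, s ≤ t₀ → q t₀ + ε * (t₀ - s) ≤ q s) → False := by
    intro ε hε t₀ key
    obtain ⟨n, hn⟩ := exists_nat_gt ((∫ t, q t) / ε)
    have hεn : (∫ t, q t) < ε * n := by
      rw [div_lt_iff₀ hε] at hn; linarith
    have hlow : ∀ s ∈ Set.Ioc (t₀ - n - 1) (t₀ - n), (ε * n : ℝ) ≤ q s := by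
      intro s hs
      have h1 : s ≤ t₀ := by have := hs.2; have : (0:ℝ) ≤ n := Nat.cast_nonneg n; linarith [hs.2]
      have h2 := key s h1
      have h3 : (n:ℝ) ≤ t₀ - s := by have := hs.2; linarith
      nlinarith [hqpos t₀, hε]
    have h8 : (ε * n) * ((volume (Set.Ioc (t₀ - n - 1) (t₀ - n))).toReal) ≤
        ∫ s in Set.Ioc (t₀ - (n:ℝ) - 1) (t₀ - n), q s := by
      apply setIntegral_ge_of_const_le_real measurableSet_Ioc
        (by simp [Real.volume_Ioc])
        hlow (hq.integrableOn)
    rw [Real.volume_Ioc, show t₀ - (n:ℝ) - (t₀ - n - 1) = 1 from by ring] at h8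
    simp at h8
    have h9 : ∫ s in Set.Ioc (t₀ - (n:ℝ) - 1) (t₀ - n), q s ≤ ∫ t, q t :=
      setIntegral_le_integral hq (Eventually.of_forall (fun t => (hqpos t).le))
    linarith
  -- existence of good endpoints
  have existsb : ∀ ε > (0:ℝ), ∀ T : ℝ, ∃ b, T < b ∧ -ε < F b := by
    intro ε hε T
    by_contra hcon
    push_neg at hcon
    set t₀ := T + 1 with ht₀
    refine growth ε hε t₀ ?_
    intro s hs
    have h1 : ∫ u in t₀..s, (-(G' u * q u)) = q s - q t₀ :=
      intervalIntegral.integral_eq_sub_of_hasDerivAt (fun u _ => hq' u)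
        ((hcontG'.mul hcontq).neg.intervalIntegrable _ _)
    have h2 : ∫ u in t₀..s, (ε:ℝ) ≤ ∫ u in t₀..s, (-(G' u * q u)) := by
      apply intervalIntegral.integral_mono_on hs
        (intervalIntegrable_const)
        ((hcontG'.mul hcontq).neg.intervalIntegrable _ _)
      intro u hu
      have hTu : T < u := by have := hu.1; simp only [ht₀] at this; linarith
      have := hcon u hTu
      simp only [hFdef] at this
      simp only [Pi.neg_apply, Pi.mul_apply]
      linarith
    rw [h1, intervalIntegral.integral_const, smul_eq_mul] at h2
    linarith
  have existsa : ∀ ε > (0:ℝ), ∀ T : ℝ, ∃ a, a < T ∧ F a < ε := by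
    intro ε hε T
    by_contra hcon
    push_neg at hcon
    set t₀ := T - 1 with ht₀
    refine growth_left ε hε t₀ ?_
    intro s hs
    have h1 : ∫ u in s..t₀, (-(G' u * q u)) = q t₀ - q s :=
      intervalIntegral.integral_eq_sub_of_hasDerivAt (fun u _ => hq' u)
        ((hcontG'.mul hcontq).neg.intervalIntegrable _ _)
    have h2 : ∫ u in s..t₀, (-(G' u * q u)) ≤ ∫ u in s..t₀, (-ε : ℝ) := by
      apply intervalIntegral.integral_mono_on hs
        ((hcontG'.mul hcontq).neg.intervalIntegrable _ _)
        (intervalIntegrable_const)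
      intro u hu
      have hTu : u < T := by have := hu.2; simp only [ht₀] at this; linarith
      have := hcon u hTu
      simp only [hFdef] at this
      simp only [Pi.neg_apply, Pi.mul_apply]
      linarith
    rw [h1, intervalIntegral.integral_const, smul_eq_mul] at h2
    linarith
  have hqnn : ∀ t, (0:ℝ) ≤ q t := fun t => (hqpos t).le
  have intq_nonneg : (0:ℝ) ≤ ∫ t, q t := integral_nonneg hqnn
  have main : ∀ T : ℝ, ∫ t in (-T)..T, (G' t)^2 * q t ≤ L * ∫ t, q t := by
    intro T
    refine le_of_forall_pos_le_add ?_
    intro ε hε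
    obtain ⟨b, hb1, hb2⟩ := existsb (ε/2) (by positivity) (max T (-T))
    obtain ⟨a, ha1, ha2⟩ := existsa (ε/2) (by positivity) (min T (-T))
    -- now : -(ε/2) < F b  and  F a < ε/2
    have hab : a ≤ b := by
      have h1 := le_max_left T (-T); have h2 := min_le_left T (-T); linarith
    have hFTC : ∫ t in a..b, (G'' t * q t - (G' t)^2 * q t) = F b - F a :=
      intervalIntegral.integral_eq_sub_of_hasDerivAt (fun u _ => hF u)
        (hcontF'.intervalIntegrable _ _)
    have hsub := intervalIntegral.integral_sub
      ((hcG''.mul hcontq).intervalIntegrable (μ := volume) a b)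
      (((hcontG'.pow 2).mul hcontq).intervalIntegrable (μ := volume) a b)
    simp only [Pi.mul_apply, Pi.pow_apply] at hsub
    rw [hsub] at hFTC
    have h4 : ∫ t in a..b, G'' t * q t ≤ ∫ t in a..b, L * q t := by
      apply intervalIntegral.integral_mono_on hab
        ((hcG''.mul hcontq).intervalIntegrable a b)
        ((continuous_const.mul hcontq).intervalIntegrable a b)
      intro u _
      exact mul_le_mul_of_nonneg_right (hGL u) (hqnn u)
    have h5 : ∫ t in a..b, L * q t = L * ∫ t in a..b, q t := by
      rw [intervalIntegral.integral_const_mul]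
    have h6 : ∫ t in a..b, q t ≤ ∫ t, q t := by
      rw [intervalIntegral.integral_of_le hab]
      exact setIntegral_le_integral hq (Eventually.of_forall hqnn)
    have h7 : ∫ t in (-T)..T, (G' t)^2 * q t ≤ ∫ t in a..b, (G' t)^2 * q t := by
      rcases le_total (-T) T with hT | hT
      · rw [intervalIntegral.integral_of_le hT, intervalIntegral.integral_of_le hab]
        apply setIntegral_mono_set
          ((((hcontG'.pow 2).mul hcontq).intervalIntegrable a b).1)
        · exact Eventually.of_forall (fun t => mul_nonneg (sq_nonneg _) (hqnn t))
        · apply Eventually.of_forall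
          apply Set.Ioc_subset_Ioc
          · have := min_le_left T (-T); have := min_le_right T (-T); linarith
          · have := le_max_left T (-T); linarith
      · rw [intervalIntegral.integral_of_ge hT]
        have : (0:ℝ) ≤ ∫ t in a..b, (G' t)^2 * q t := by
          rw [intervalIntegral.integral_of_le hab]
          apply setIntegral_nonneg measurableSet_Ioc
          intro t _; exact mul_nonneg (sq_nonneg _) (hqnn t)
        have hnn : (0:ℝ) ≤ ∫ t in Set.Ioc T (-T), (G' t)^2 * q t := by
          apply setIntegral_nonneg measurableSet_Ioc
          intro t _; exact mul_nonneg (sq_nonneg _) (hqnn t)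
        linarith
    have hLq : L * ∫ t in a..b, q t ≤ L * ∫ t, q t :=
      mul_le_mul_of_nonneg_left h6 hL.le
    linarith
  have hInt : Integrable (fun t => (G' t)^2 * q t) := by
    apply MeasureTheory.integrable_of_intervalIntegral_norm_bounded
      (L * ∫ t, q t) (a := fun n : ℕ => -(n:ℝ)) (b := fun n : ℕ => (n:ℝ))
      (fun n => (((hcontG'.pow 2).mul hcontq).intervalIntegrable _ _).1)
      (tendsto_neg_atBot_iff.mpr tendsto_natCast_atTop_atTop)
      tendsto_natCast_atTop_atTop
    apply Eventually.of_forall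
    intro n
    have : ∫ x in -(n:ℝ)..(n:ℝ), ‖(G' x)^2 * q x‖ = ∫ x in -(n:ℝ)..(n:ℝ), (G' x)^2 * q x := by
      apply intervalIntegral.integral_congr
      intro x _
      exact norm_of_nonneg (mul_nonneg (sq_nonneg _) (hqnn x))
    simp only [Pi.mul_apply, Pi.pow_apply]
    rw [this]
    exact main n
  refine ⟨hInt, ?_⟩
  have htends := intervalIntegral_tendsto_integral hInt
      (tendsto_neg_atBot_iff.mpr (tendsto_natCast_atTop_atTop (R := ℝ)))
      (tendsto_natCast_atTop_atTop (R := ℝ))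
  exact le_of_tendsto htends (Eventually.of_forall fun n => main n)

private lemma lineLemma2 {c a : ℝ} {G G' : ℝ → ℝ} (hc : 0 < c)
    (hG' : ∀ t, HasDerivAt G (G' t) t) (hcontG' : Continuous G')
    (hq : Integrable (fun t => c * Real.exp (-G t)))
    (hq2 : Integrable (fun t => (t - a)^2 * (c * Real.exp (-G t))))
    (hsq : Integrable (fun t => (G' t)^2 * (c * Real.exp (-G t)))) :
    ∫ t, (G' t * (t - a)) * (c * Real.exp (-G t)) = ∫ t, c * Real.exp (-G t) := by
  set q : ℝ → ℝ := fun t => c * Real.exp (-G t) with hqdef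
  have hqpos : ∀ t, 0 < q t := fun t => mul_pos hc (Real.exp_pos _)
  have hdiffG : Differentiable ℝ G := fun t => (hG' t).differentiableAt
  have hcontq : Continuous q := continuous_const.mul (hdiffG.continuous.neg.rexp)
  have hq' : ∀ t, HasDerivAt q (-(G' t * q t)) t := by
    intro t
    have h1 : HasDerivAt (fun s => Real.exp (-G s)) (Real.exp (-G t) * (-G' t)) t :=
      ((hG' t).neg).exp
    have h2 := h1.const_mul c
    refine h2.congr_deriv ?_
    simp only [hqdef]
    ring
  have hcross : Integrable (fun t => (G' t * (t - a)) * q t) := by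
    apply Integrable.mono (hq2.add hsq)
      (((hcontG'.mul (continuous_id.sub continuous_const)).mul hcontq).aestronglyMeasurable)
    apply Eventually.of_forall
    intro t
    simp only [Pi.add_apply, Pi.mul_apply, Pi.sub_apply, id_eq]
    have h1 : |G' t * (t - a)| ≤ (t - a)^2 + (G' t)^2 := by
      nlinarith [abs_nonneg (G' t * (t-a)), abs_mul_abs_self (G' t * (t-a)), sq_abs (G' t * (t-a)), abs_mul (G' t) (t-a), sq_nonneg (|G' t| - |t - a|), abs_nonneg (G' t), abs_nonneg (t-a), sq_abs (G' t), sq_abs (t-a)]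
    have h2 : (0:ℝ) ≤ q t := (hqpos t).le
    rw [Real.norm_eq_abs, Real.norm_eq_abs, abs_mul, abs_of_nonneg h2]
    have h3 : (0:ℝ) ≤ (t-a)^2 * q t + (G' t)^2 * q t := by positivity
    rw [abs_of_nonneg h3]
    nlinarith [h1, h2]
  have hh : ∀ t, HasDerivAt (fun t => (t - a) * q t) (q t - (G' t * (t - a)) * q t) t := by
    intro t
    have := ((hasDerivAt_id t).sub_const a).mul (hq' t)
    simp only [id_eq] at this
    refine this.congr_deriv ?_
    ring
  have hhint : Integrable (fun t => (t - a) * q t) := by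
    apply Integrable.mono (hq2.add hq)
      (((continuous_id.sub continuous_const).mul hcontq).aestronglyMeasurable)
    apply Eventually.of_forall
    intro t
    simp only [Pi.add_apply, Pi.mul_apply, Pi.sub_apply, id_eq]
    have h2 : (0:ℝ) ≤ q t := (hqpos t).le
    have h3 : (0:ℝ) ≤ (t-a)^2 * q t + q t := by positivity
    rw [Real.norm_eq_abs, Real.norm_eq_abs, abs_mul, abs_of_nonneg h2, abs_of_nonneg h3]
    have h1 : |t - a| ≤ (t - a)^2 + 1 := by nlinarith [sq_abs (t-a), abs_nonneg (t-a), sq_nonneg (|t-a| - 1)]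
    nlinarith
  have hder_int : Integrable (fun t => q t - (G' t * (t - a)) * q t) := hq.sub hcross
  have hzero : ∫ t, (q t - (G' t * (t - a)) * q t) = 0 :=
    integral_eq_zero_of_hasDerivAt_of_integrable hh hder_int hhint
  rw [integral_sub hq hcross] at hzero
  linarith


private lemma lineDeriv1 {d : ℕ} {f : Vec d → ℝ} (hC2 : ContDiff ℝ 2 f) (c v : Vec d) (t : ℝ) :
    HasDerivAt (fun s => f (c + s • v)) (fderiv ℝ f (c + t • v) v) t := by
  have hline : HasDerivAt (fun s : ℝ => c + s • v) v t := by
    simpa using ((hasDerivAt_id t).smul_const v).const_add c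
  have hdf : DifferentiableAt ℝ f (c + t • v) :=
    (hC2.differentiable (by norm_num)) _
  exact hdf.hasFDerivAt.comp_hasDerivAt t hline

private lemma lineDeriv2 {d : ℕ} {f : Vec d → ℝ} (hC2 : ContDiff ℝ 2 f) (c v : Vec d) (t : ℝ) :
    HasDerivAt (fun s => fderiv ℝ f (c + s • v) v)
      (fderiv ℝ (fderiv ℝ f) (c + t • v) v v) t := by
  have hline : HasDerivAt (fun s : ℝ => c + s • v) v t := by
    simpa using ((hasDerivAt_id t).smul_const v).const_add c
  have hC1 : ContDiff ℝ 1 (fderiv ℝ f) := hC2.fderiv_right (le_refl _)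
  have hdf : DifferentiableAt ℝ (fderiv ℝ f) (c + t • v) := (hC1.differentiable one_ne_zero) _
  have hΦ : HasFDerivAt (fun x => fderiv ℝ f x v)
      ((ContinuousLinearMap.apply ℝ ℝ v).comp (fderiv ℝ (fderiv ℝ f) (c + t • v)))
      (c + t • v) :=
    ((ContinuousLinearMap.apply ℝ ℝ v).hasFDerivAt).comp _ hdf.hasFDerivAt
  exact hΦ.comp_hasDerivAt t hline

private lemma contPhi {d : ℕ} {f : Vec d → ℝ} (hC2 : ContDiff ℝ 2 f) (v : Vec d) :
    Continuous (fun x => fderiv ℝ f x v) :=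
  (hC2.continuous_fderiv (by norm_num)).clm_apply continuous_const

private lemma contPhi2 {d : ℕ} {f : Vec d → ℝ} (hC2 : ContDiff ℝ 2 f) (v : Vec d) :
    Continuous (fun x => fderiv ℝ (fderiv ℝ f) x v v) :=
  (((hC2.fderiv_right (m := 1) (le_refl _)).continuous_fderiv one_ne_zero).clm_apply
    continuous_const).clm_apply continuous_const

private lemma hess_eq {d : ℕ} (f : Vec d → ℝ) (x v : Vec d) :
    iteratedFDeriv ℝ 2 f x ![v, v] = fderiv ℝ (fderiv ℝ f) x v v := by
  rw [iteratedFDeriv_two_apply]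
  simp


private noncomputable def lineEquiv (n : ℕ) (b : OrthonormalBasis (Fin (n+1)) ℝ (Vec (n+1))) :
    (ℝ × (Fin n → ℝ)) ≃ᵐ Vec (n+1) :=
  ((MeasurableEquiv.piFinSuccAbove (fun _ : Fin (n+1) => ℝ) 0).symm.trans
    (MeasurableEquiv.toLp 2 (Fin (n+1) → ℝ))).trans
    (b.repr.toHomeomorph.toMeasurableEquiv).symm

private lemma lineEquiv_mp (n : ℕ) (b : OrthonormalBasis (Fin (n+1)) ℝ (Vec (n+1))) :
    MeasurePreserving (lineEquiv n b) volume volume := by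
  have h1 : MeasurePreserving
      (MeasurableEquiv.piFinSuccAbove (fun _ : Fin (n+1) => ℝ) 0).symm volume volume :=
    (volume_preserving_piFinSuccAbove (fun _ : Fin (n+1) => ℝ) 0).symm _
  have h2 : MeasurePreserving (MeasurableEquiv.toLp 2 (Fin (n+1) → ℝ)) volume volume :=
    (EuclideanSpace.volume_preserving_symm_measurableEquiv_toLp (Fin (n+1))).symm _
  have h3 : MeasurePreserving (b.repr.toHomeomorph.toMeasurableEquiv).symm volume volume :=
    b.measurePreserving_repr_symm
  exact (h3.comp (h2.comp h1) : _)

private lemma lineEquiv_add (n : ℕ) (b : OrthonormalBasis (Fin (n+1)) ℝ (Vec (n+1)))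
    (t : ℝ) (w : Fin n → ℝ) :
    lineEquiv n b (t, w) = lineEquiv n b (0, w) + t • (b 0) := by
  show b.repr.symm ((MeasurableEquiv.toLp 2 (Fin (n+1) → ℝ))
      ((MeasurableEquiv.piFinSuccAbove (fun _ : Fin (n+1) => ℝ) 0).symm (t, w)))
    = b.repr.symm ((MeasurableEquiv.toLp 2 (Fin (n+1) → ℝ))
      ((MeasurableEquiv.piFinSuccAbove (fun _ : Fin (n+1) => ℝ) 0).symm (0, w))) + t • (b 0)
  have key : ((MeasurableEquiv.toLp 2 (Fin (n+1) → ℝ))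
        ((MeasurableEquiv.piFinSuccAbove (fun _ : Fin (n+1) => ℝ) 0).symm (t, w)))
      = ((MeasurableEquiv.toLp 2 (Fin (n+1) → ℝ))
        ((MeasurableEquiv.piFinSuccAbove (fun _ : Fin (n+1) => ℝ) 0).symm (0, w)))
        + t • (EuclideanSpace.single (0 : Fin (n+1)) (1:ℝ)) := by
    ext j
    simp only [MeasurableEquiv.toLp_apply]
    induction j using Fin.cases with
    | zero =>
        simp [MeasurableEquiv.piFinSuccAbove, EuclideanSpace.single_apply]
    | succ k =>
        simp [MeasurableEquiv.piFinSuccAbove, EuclideanSpace.single_apply,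
          Fin.succ_ne_zero]
  rw [key, map_add, _root_.map_smul, OrthonormalBasis.repr_symm_single]

private lemma exists_basis_eq (n : ℕ) (v : Vec (n+1)) (hv : ‖v‖ = 1) :
    ∃ b : OrthonormalBasis (Fin (n+1)) ℝ (Vec (n+1)), b 0 = v := by
  have hcard : Module.finrank ℝ (Vec (n+1)) = Fintype.card (Fin (n+1)) := by
    simp [finrank_euclideanSpace]
  have horth : Orthonormal ℝ (Set.restrict {(0 : Fin (n+1))} (fun _ : Fin (n+1) => v)) := by
    constructor
    · intro i; exact hv
    · intro i j hij
      refine absurd (Subtype.ext ?_) hij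
      have hi := i.2; have hj := j.2
      simp only [Set.mem_singleton_iff] at hi hj
      rw [hi, hj]
  obtain ⟨b, hb⟩ := horth.exists_orthonormalBasis_extension_of_card_eq hcard
  exact ⟨b, hb 0 rfl⟩

set_option maxHeartbeats 2000000 in
private theorem main_aux (n : ℕ) (f : Vec (n+1) → ℝ) (Z L : ℝ) (hZ : 0 < Z) (hL : 0 < L)
    (hC2 : ContDiff ℝ 2 f)
    (hhess : ∀ x w : Vec (n+1), iteratedFDeriv ℝ 2 f x ![w, w] ≤ L * ‖w‖ ^ 2)
    (hint : ∫ x, Z⁻¹ * Real.exp (-f x) = 1)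
    (hmom : Integrable (fun x : Vec (n+1) => ‖x‖ ^ 2 * (Z⁻¹ * Real.exp (-f x))))
    (m v : Vec (n+1)) (hv : ‖v‖ = 1) :
    1 / L ≤ ∫ x, ⟪v, x - m⟫ ^ 2 * (Z⁻¹ * Real.exp (-f x)) := by
  set ρf : Vec (n+1) → ℝ := fun x => Z⁻¹ * Real.exp (-f x) with hρdef
  have hρpos : ∀ x, 0 < ρf x := fun x => mul_pos (inv_pos.mpr hZ) (Real.exp_pos _)
  have hρnn : ∀ x, 0 ≤ ρf x := fun x => (hρpos x).le
  have hρcont : Continuous ρf :=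
    continuous_const.mul ((hC2.continuous.neg).rexp)
  have hρint : Integrable ρf := by
    by_contra h
    rw [integral_undef h] at hint
    norm_num at hint
  -- φ, ψ and the three global integrands
  set φ : Vec (n+1) → ℝ := fun x => fderiv ℝ f x v with hφdef
  set ψ : Vec (n+1) → ℝ := fun x => ⟪v, x - m⟫ with hψdef
  have hφcont : Continuous φ := contPhi hC2 v
  have hψcont : Continuous ψ := by
    apply Continuous.inner continuous_const (continuous_id.sub continuous_const)
  set Sq : Vec (n+1) → ℝ := fun x => (φ x) ^ 2 * ρf x with hSqdef
  set Pr : Vec (n+1) → ℝ := fun x => (φ x * ψ x) * ρf x with hPrdef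
  set Vr : Vec (n+1) → ℝ := fun x => (ψ x) ^ 2 * ρf x with hVrdef
  have hSqcont : Continuous Sq := (hφcont.pow 2).mul hρcont
  have hVrcont : Continuous Vr := (hψcont.pow 2).mul hρcont
  have hPrcont : Continuous Pr := ((hφcont.mul hψcont)).mul hρcont
  -- Vr is integrable
  have hVrint : Integrable Vr := by
    apply Integrable.mono ((hmom.const_mul 2).add (hρint.const_mul (2 * ‖m‖^2)))
      hVrcont.aestronglyMeasurable
    apply Eventually.of_forall
    intro x
    simp only [Pi.add_apply]
    have h1 : |ψ x| ≤ ‖x - m‖ := by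
      simpa [hv] using abs_real_inner_le_norm v (x - m)
    have h2 : ‖x - m‖ ≤ ‖x‖ + ‖m‖ := norm_sub_le x m
    have h3 : (ψ x)^2 ≤ 2 * ‖x‖^2 + 2 * ‖m‖^2 := by
      have h6 : |ψ x| ^ 2 ≤ (‖x‖ + ‖m‖)^2 :=
        pow_le_pow_left₀ (abs_nonneg _) (le_trans h1 h2) 2
      rw [sq_abs] at h6
      nlinarith [sq_nonneg (‖x‖ - ‖m‖)]
    have h4 : 0 ≤ ρf x := hρnn x
    have h5 : (0:ℝ) ≤ 2 * (‖x‖^2 * ρf x) + 2 * ‖m‖^2 * ρf x := by positivity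
    rw [Real.norm_eq_abs, Real.norm_eq_abs, abs_of_nonneg (by positivity), abs_of_nonneg h5]
    have h7 : Vr x = ψ x ^ 2 * ρf x := rfl
    nlinarith [mul_le_mul_of_nonneg_right h3 h4]
  -- the basis and line decomposition
  obtain ⟨b, hb0⟩ := exists_basis_eq n v hv
  set Ψ := lineEquiv n b with hΨdef
  have mp : MeasurePreserving Ψ volume volume := lineEquiv_mp n b
  have hΨadd : ∀ (t : ℝ) (w : Fin n → ℝ), Ψ (t, w) = Ψ (0, w) + t • v := by
    intro t w; rw [hΨdef, lineEquiv_add n b t w, hb0]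
  have volprod : (volume : Measure (ℝ × (Fin n → ℝ))) = (volume : Measure ℝ).prod volume :=
    MeasureTheory.Measure.volume_eq_prod _ _
  -- Fubini helpers
  have comp_int : ∀ {F : Vec (n+1) → ℝ}, Integrable F →
      Integrable (fun p : ℝ × (Fin n → ℝ) => F (Ψ p)) ((volume : Measure ℝ).prod volume) := by
    intro F hF
    have h := (mp.integrable_comp_emb Ψ.measurableEmbedding).mpr hF
    rwa [volprod] at h
  have int_eq : ∀ {F : Vec (n+1) → ℝ}, Integrable F →
      ∫ x, F x = ∫ w, ∫ t, F (Ψ (t, w)) := by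
    intro F hF
    have h1 : ∫ x, F x = ∫ p, F (Ψ p) ∂(volume : Measure (ℝ × (Fin n → ℝ))) :=
      (mp.integral_comp Ψ.measurableEmbedding F).symm
    rw [h1, volprod]
    exact integral_prod_symm _ (comp_int hF)
  have slice_ae : ∀ {F : Vec (n+1) → ℝ}, Integrable F →
      ∀ᵐ w : Fin n → ℝ, Integrable (fun t => F (Ψ (t, w))) := by
    intro F hF
    exact (comp_int hF).prod_left_ae
  -- line structure
  have line_q : ∀ (w : Fin n → ℝ),
      (fun t => ρf (Ψ (t, w))) = fun t => Z⁻¹ * Real.exp (-(f (Ψ (0,w) + t • v))) := by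
    intro w; funext t; rw [hρdef]; simp only; rw [hΨadd]
  have line_psi : ∀ (t : ℝ) (w : Fin n → ℝ), ψ (Ψ (t, w)) = t - (-⟪v, Ψ (0,w) - m⟫) := by
    intro t w
    rw [hψdef]
    simp only
    rw [hΨadd]
    have : Ψ (0, w) + t • v - m = (Ψ (0,w) - m) + t • v := by abel
    rw [this, inner_add_right, real_inner_smul_right, real_inner_self_eq_norm_sq, hv]
    ring
  have hG'' : ∀ (w : Fin n → ℝ) (t : ℝ), fderiv ℝ (fderiv ℝ f) (Ψ (0,w) + t • v) v v ≤ L := by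
    intro w t
    have := hhess (Ψ (0,w) + t • v) v
    rw [hess_eq] at this
    simpa [hv] using this
  -- per-line conclusion 1
  have hline1 : ∀ w : Fin n → ℝ, Integrable (fun t => ρf (Ψ (t, w))) →
      Integrable (fun t => Sq (Ψ (t, w))) ∧
        ∫ t, Sq (Ψ (t, w)) ≤ L * ∫ t, ρf (Ψ (t, w)) := by
    intro w hw
    rw [line_q w] at hw
    have h := lineLemma1 (G := fun s => f (Ψ (0,w) + s • v))
      (G' := fun s => fderiv ℝ f (Ψ (0,w) + s • v) v)
      (G'' := fun s => fderiv ℝ (fderiv ℝ f) (Ψ (0,w) + s • v) v v)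
      hL (inv_pos.mpr hZ)
      (lineDeriv1 hC2 (Ψ (0,w)) v) (lineDeriv2 hC2 (Ψ (0,w)) v)
      ((contPhi2 hC2 v).comp (continuous_const.add (continuous_id.smul continuous_const)))
      (hG'' w) hw
    have heq : (fun t => Sq (Ψ (t, w)))
        = fun t => (fderiv ℝ f (Ψ (0,w) + t • v) v)^2
            * (Z⁻¹ * Real.exp (-(f (Ψ (0,w) + t • v)))) := by
      funext t
      rw [hSqdef]; simp only
      rw [hΨadd t w, hφdef, hρdef]
    rw [heq, line_q w]
    exact h
  -- global facts about Sq
  have hSqΨaesm : AEStronglyMeasurable (fun p : ℝ × (Fin n → ℝ) => Sq (Ψ p))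
      ((volume : Measure ℝ).prod volume) :=
    ((hSqcont.measurable.comp Ψ.measurable).stronglyMeasurable).aestronglyMeasurable
  have hρslice := slice_ae hρint
  have hr_int : Integrable (fun w => ∫ t, ρf (Ψ (t, w))) := (comp_int hρint).integral_prod_right
  have hr_one : ∫ w, ∫ t, ρf (Ψ (t, w)) = 1 := by rw [← int_eq hρint]; exact hint
  have hr_nn : ∀ w, 0 ≤ ∫ t, ρf (Ψ (t, w)) := fun w => integral_nonneg (fun t => hρnn _)
  have hSqnn : ∀ x, 0 ≤ Sq x := fun x => mul_nonneg (sq_nonneg _) (hρnn x)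
  have hSqΨint : Integrable (fun p : ℝ × (Fin n → ℝ) => Sq (Ψ p))
      ((volume : Measure ℝ).prod volume) := by
    rw [integrable_prod_iff' hSqΨaesm]
    constructor
    · filter_upwards [hρslice] with w hw
      exact (hline1 w hw).1
    · apply Integrable.mono (hr_int.const_mul L)
        (((hSqcont.measurable.comp Ψ.measurable).stronglyMeasurable.norm.integral_prod_left')).aestronglyMeasurable
      filter_upwards [hρslice] with w hw
      have h1 : ∫ t, ‖Sq (Ψ (t, w))‖ = ∫ t, Sq (Ψ (t, w)) := by
        congr 1; funext t; exact norm_of_nonneg (hSqnn _)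
      show ‖∫ t, ‖Sq (Ψ (t, w))‖‖ ≤ ‖L * ∫ t, ρf (Ψ (t, w))‖
      rw [Real.norm_eq_abs, Real.norm_eq_abs, h1,
        abs_of_nonneg (integral_nonneg (fun t => hSqnn _)),
        abs_of_nonneg (by positivity : (0:ℝ) ≤ L * ∫ t, ρf (Ψ (t, w)))]
      exact (hline1 w hw).2
  have hSqint : Integrable Sq := by
    have := hSqΨint
    rw [← volprod] at this
    exact (mp.integrable_comp_emb Ψ.measurableEmbedding).mp this
  have hSqle : ∫ x, Sq x ≤ L := by
    rw [int_eq hSqint]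
    have h1 : ∫ w, ∫ t, Sq (Ψ (t, w)) ≤ ∫ w, L * ∫ t, ρf (Ψ (t, w)) := by
      apply integral_mono_ae hSqΨint.integral_prod_right (hr_int.const_mul L)
      filter_upwards [hρslice] with w hw
      exact (hline1 w hw).2
    calc ∫ w, ∫ t, Sq (Ψ (t, w)) ≤ ∫ w, L * ∫ t, ρf (Ψ (t, w)) := h1
      _ = L * ∫ w, ∫ t, ρf (Ψ (t, w)) := integral_const_mul _ _
      _ = L := by rw [hr_one, mul_one]
  -- Pr integrable and its integral equals 1
  have hPrint : Integrable Pr := by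
    apply Integrable.mono (hSqint.add hVrint) hPrcont.aestronglyMeasurable
    apply Eventually.of_forall
    intro x
    simp only [Pi.add_apply]
    have h4 : 0 ≤ ρf x := hρnn x
    have h1 : |φ x * ψ x| ≤ (φ x)^2 + (ψ x)^2 := by
      nlinarith [sq_nonneg (|φ x| - |ψ x|), abs_nonneg (φ x), abs_nonneg (ψ x),
        sq_abs (φ x), sq_abs (ψ x), abs_mul (φ x) (ψ x)]
    rw [Real.norm_eq_abs, Real.norm_eq_abs, abs_mul, abs_of_nonneg h4,
      abs_of_nonneg (by positivity : (0:ℝ) ≤ (φ x)^2 * ρf x + (ψ x)^2 * ρf x)]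
    have h7 : Sq x = φ x ^ 2 * ρf x := rfl
    have h8 : Vr x = ψ x ^ 2 * ρf x := rfl
    nlinarith [mul_le_mul_of_nonneg_right h1 h4, abs_nonneg (φ x * ψ x)]
  have hPr_one : ∫ x, Pr x = 1 := by
    rw [int_eq hPrint]
    have key : ∀ᵐ w : Fin n → ℝ, ∫ t, Pr (Ψ (t, w)) = ∫ t, ρf (Ψ (t, w)) := by
      filter_upwards [hρslice, slice_ae hVrint, (hSqΨint.prod_left_ae)] with w hw hVw hSw
      have hq2' : Integrable (fun t => (t - (-⟪v, Ψ (0,w) - m⟫))^2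
          * (Z⁻¹ * Real.exp (-(f (Ψ (0,w) + t • v))))) volume := by
        have heq : (fun t => Vr (Ψ (t, w)))
            = fun t => (t - (-⟪v, Ψ (0,w) - m⟫))^2
              * (Z⁻¹ * Real.exp (-(f (Ψ (0,w) + t • v)))) := by
          funext t
          rw [hVrdef]; simp only
          rw [line_psi t w, hΨadd t w, hρdef]
        rwa [heq] at hVw
      have hsq' : Integrable (fun t : ℝ => (fderiv ℝ f (Ψ (0,w) + t • v) v)^2
          * (Z⁻¹ * Real.exp (-(f (Ψ (0,w) + t • v))))) volume := by
        have heq : (fun t => Sq (Ψ (t, w)))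
            = fun t => (fderiv ℝ f (Ψ (0,w) + t • v) v)^2
              * (Z⁻¹ * Real.exp (-(f (Ψ (0,w) + t • v)))) := by
          funext t
          rw [hSqdef]; simp only
          rw [hΨadd t w, hφdef, hρdef]
        rwa [heq] at hSw
      have hw' := hw
      rw [line_q w] at hw'
      have h := lineLemma2 (G := fun s => f (Ψ (0,w) + s • v))
        (G' := fun s => fderiv ℝ f (Ψ (0,w) + s • v) v)
        (a := -⟪v, Ψ (0,w) - m⟫)
        (inv_pos.mpr hZ) (lineDeriv1 hC2 (Ψ (0,w)) v)
        ((contPhi hC2 v).comp (continuous_const.add (continuous_id.smul continuous_const)))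
        hw' hq2' hsq'
      have heqPr : (fun t => Pr (Ψ (t, w)))
          = fun t => ((fderiv ℝ f (Ψ (0,w) + t • v) v) * (t - (-⟪v, Ψ (0,w) - m⟫)))
            * (Z⁻¹ * Real.exp (-(f (Ψ (0,w) + t • v)))) := by
        funext t
        rw [hPrdef]; simp only
        rw [line_psi t w, hΨadd t w, hφdef, hρdef]
      rw [heqPr, line_q w]
      exact h
    rw [integral_congr_ae key]
    exact hr_one
  -- final computation
  have hexp : (fun x => (L⁻¹ * φ x - ψ x)^2 * ρf x)
      = fun x => (L⁻¹)^2 * Sq x - (2 * L⁻¹) * Pr x + Vr x := by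
    funext x; rw [hSqdef, hPrdef, hVrdef]; simp only; ring
  have hnonneg : 0 ≤ ∫ x, (L⁻¹ * φ x - ψ x)^2 * ρf x :=
    integral_nonneg (fun x => mul_nonneg (sq_nonneg _) (hρnn x))
  rw [hexp] at hnonneg
  have hsplit : ∫ x, ((L⁻¹)^2 * Sq x - (2 * L⁻¹) * Pr x + Vr x)
      = (L⁻¹)^2 * (∫ x, Sq x) - (2 * L⁻¹) * (∫ x, Pr x) + ∫ x, Vr x := by
    rw [integral_add (f := fun x => (L⁻¹)^2 * Sq x - (2 * L⁻¹) * Pr x) (g := Vr)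
        ((hSqint.const_mul ((L⁻¹)^2)).sub (hPrint.const_mul (2 * L⁻¹))) hVrint,
      integral_sub (hSqint.const_mul ((L⁻¹)^2)) (hPrint.const_mul (2 * L⁻¹)),
      integral_const_mul, integral_const_mul]
  rw [hsplit, hPr_one] at hnonneg
  have hSqterm : (L⁻¹)^2 * ∫ x, Sq x ≤ (L⁻¹)^2 * L := by
    apply mul_le_mul_of_nonneg_left hSqle (by positivity)
  have hL' : (L⁻¹)^2 * L = L⁻¹ := by field_simp
  have : 1/L = L⁻¹ := one_div L
  nlinarith [hnonneg, hSqterm]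

end AuxBL

/-- Brascamp–Lieb-type covariance lower bound: if
`-∇² log ρ ⪯ L I_d`, then `Cov_ρ(X) ⪰ (1/L) I_d`. -/
theorem covariance_lower_bound (d : ℕ) (ρ fpot : Vec d → ℝ) (L : ℝ)
    (hL : 0 < L)
    (hprop : ∃ Z : ℝ, 0 < Z ∧ ∀ x, ρ x = Z⁻¹ * Real.exp (-fpot x))
    (hC2 : ContDiff ℝ 2 fpot)
    (hhess : ∀ x v : Vec d, hessQ d fpot x v ≤ L * ‖v‖ ^ 2)
    (hint : ∫ x, ρ x = 1)
    (hmom : Integrable (fun x : Vec d => ‖x‖ ^ 2 * ρ x)) :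
    ∀ v : Vec d, ‖v‖ ^ 2 / L ≤ ∫ x, ⟪v, x - ∫ y, ρ y • y⟫ ^ 2 * ρ x := by
  obtain ⟨Z, hZ, hρeq⟩ := hprop
  have hρfun : ρ = fun x => Z⁻¹ * Real.exp (-fpot x) := funext hρeq
  subst hρfun
  intro v
  rcases eq_or_ne v 0 with rfl | hv0
  · simp
  · cases d with
    | zero => exact absurd (Subsingleton.elim v 0) hv0
    | succ n =>
      set m : Vec (n+1) := ∫ y, (fun x => Z⁻¹ * Real.exp (-fpot x)) y • y with hm
      set u : Vec (n+1) := ‖v‖⁻¹ • v with hu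
      have hu1 : ‖u‖ = 1 := norm_smul_inv_norm hv0
      have haux := main_aux n fpot Z L hZ hL hC2
        (fun x w => by simpa [hessQ] using hhess x w) hint hmom m u hu1
      have hrw : ∀ x : Vec (n+1), ⟪v, x - m⟫ ^ 2 * (Z⁻¹ * Real.exp (-fpot x))
          = ‖v‖^2 * (⟪u, x - m⟫ ^ 2 * (Z⁻¹ * Real.exp (-fpot x))) := by
        intro x
        have h1 : ⟪u, x - m⟫ = ‖v‖⁻¹ * ⟪v, x - m⟫ := real_inner_smul_left v (x - m) ‖v‖⁻¹
        rw [h1]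
        have hnv : ‖v‖ ≠ 0 := norm_ne_zero_iff.mpr hv0
        field_simp
      calc ‖v‖ ^ 2 / L = ‖v‖^2 * (1 / L) := by ring
        _ ≤ ‖v‖^2 * ∫ x, ⟪u, x - m⟫ ^ 2 * (Z⁻¹ * Real.exp (-fpot x)) :=
            mul_le_mul_of_nonneg_left haux (by positivity)
        _ = ∫ x, ‖v‖^2 * (⟪u, x - m⟫ ^ 2 * (Z⁻¹ * Real.exp (-fpot x))) :=
            (integral_const_mul _ _).symm
        _ = ∫ x, ⟪v, x - m⟫ ^ 2 * (Z⁻¹ * Real.exp (-fpot x)) := by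
            congr 1; funext x; rw [hrw x]
end
end

section
/- Let p be an everywhere positive, continuously differentiable probability density on ℝ^d whose score s = ∇ log p is (L, β)-Hölder continuous for some 0 < β ≤ 1, and for t > 0 let p_t be the density of p * N(0, t I_d). Then for every t > 0 and every y ∈ ℝ^d, log( p(y) / p_t(y) ) ≤ L (t d)^{(1+β)/2}. -/
open MeasureTheory Real
open scoped RealInnerProductSpace ENNReal

noncomputable section

section AuxLemmas

open Set

lemma integral_even_eq (f : ℝ → ℝ) (hf : ∀ x, f (-x) = f x) (h : Integrable f) :
    ∫ x, f x = 2 * ∫ x in Ioi (0:ℝ), f x := by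
  have h1 : ∫ x in Iic (0:ℝ), f x = ∫ x in Ioi (0:ℝ), f x := by
    rw [← show -(0:ℝ) = 0 by norm_num, ← integral_comp_neg_Ioi]
    simp [hf]
  rw [← intervalIntegral.integral_Iic_add_Ioi (b := (0:ℝ)) h.integrableOn h.integrableOn, h1]
  ring

lemma gauss1d_sq {b : ℝ} (hb : 0 < b) :
    ∫ x : ℝ, x ^ 2 * rexp (-b * x ^ 2) = (2 * b)⁻¹ * ∫ x : ℝ, rexp (-b * x ^ 2) := by
  have hI2 : Integrable (fun x : ℝ => x ^ 2 * rexp (-b * x ^ 2)) := by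
    have := integrable_rpow_mul_exp_neg_mul_sq hb (s := 2) (by norm_num)
    exact this.congr (Filter.Eventually.of_forall fun x => by
      simp [Real.rpow_two])
  have hI0 : Integrable (fun x : ℝ => rexp (-b * x ^ 2)) := integrable_exp_neg_mul_sq hb
  have e2 : ∫ x in Ioi (0:ℝ), x ^ 2 * rexp (-b * x ^ 2)
      = b ^ (-(3:ℝ)/2) * (1/2) * Gamma (3/2) := by
    have := integral_rpow_mul_exp_neg_mul_rpow (p := 2) (q := 2) (by norm_num) (by norm_num) hb
    rw [show ∫ x in Ioi (0:ℝ), x ^ 2 * rexp (-b * x ^ 2)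
        = ∫ x in Ioi (0:ℝ), x ^ (2:ℝ) * rexp (-b * x ^ (2:ℝ)) from by
      refine setIntegral_congr_fun measurableSet_Ioi fun x hx => ?_
      rw [Real.rpow_two], this]
    norm_num
  have e0 : ∫ x in Ioi (0:ℝ), rexp (-b * x ^ 2)
      = b ^ (-(1:ℝ)/2) * (1/2) * Gamma (1/2) := by
    have := integral_rpow_mul_exp_neg_mul_rpow (p := 2) (q := 0) (by norm_num) (by norm_num) hb
    rw [show ∫ x in Ioi (0:ℝ), rexp (-b * x ^ 2)
        = ∫ x in Ioi (0:ℝ), x ^ (0:ℝ) * rexp (-b * x ^ (2:ℝ)) from by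
      refine setIntegral_congr_fun measurableSet_Ioi fun x hx => ?_
      rw [Real.rpow_two, Real.rpow_zero, one_mul],
      this]
    norm_num
  rw [integral_even_eq _ (fun x => by ring_nf) hI2, integral_even_eq _ (fun x => by ring_nf) hI0,
    e2, e0]
  have hG : Gamma (3/2) = (1/2) * Gamma (1/2) := by
    rw [show (3:ℝ)/2 = 1/2 + 1 by norm_num, Real.Gamma_add_one (by norm_num)]
  have hbp : b ^ (-(3:ℝ)/2) = b⁻¹ * b ^ (-(1:ℝ)/2) := by
    rw [← Real.rpow_neg_one b, ← Real.rpow_add hb]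
    norm_num
  rw [hG, hbp]
  field_simp

lemma euclid_coord (d : ℕ) (x : Fin d → ℝ) (i : Fin d) :
    (((MeasurableEquiv.toLp 2 (Fin d → ℝ)).symm).symm x) i = x i := rfl

lemma euclid_norm_sq (d : ℕ) (v : Vec d) : ‖v‖ ^ 2 = ∑ i, (v i) ^ 2 := by
  rw [EuclideanSpace.norm_eq, sq_sqrt (Finset.sum_nonneg fun i _ => sq_nonneg _)]
  simp [sq_abs]

lemma euclid_integral_eq {d : ℕ} (f : Vec d → ℝ) :
    ∫ v : Vec d, f v
      = ∫ x : Fin d → ℝ, f (((MeasurableEquiv.toLp 2 (Fin d → ℝ)).symm).symm x) :=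
  ((MeasurePreserving.symm _
      (EuclideanSpace.volume_preserving_symm_measurableEquiv_toLp (Fin d))).integral_comp
    (MeasurableEquiv.measurableEmbedding _) f).symm

lemma gauss_prod (d : ℕ) (b : ℝ) (x : Fin d → ℝ) :
    rexp (-b * ‖((MeasurableEquiv.toLp 2 (Fin d → ℝ)).symm).symm x‖ ^ 2)
      = ∏ i, rexp (-b * x i ^ 2) := by
  rw [euclid_norm_sq, ← Real.exp_sum]
  congr 1
  rw [Finset.mul_sum]
  exact Finset.sum_congr rfl fun i _ => rfl

lemma integrable_gauss_eucl (d : ℕ) {b : ℝ} (hb : 0 < b) :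
    Integrable (fun v : Vec d => rexp (-b * ‖v‖ ^ 2)) := by
  have h := MeasurePreserving.symm _ (EuclideanSpace.volume_preserving_symm_measurableEquiv_toLp (Fin d))
  rw [← MeasurePreserving.integrable_comp_emb h (MeasurableEquiv.measurableEmbedding _)]
  have : ((fun v : Vec d => rexp (-b * ‖v‖ ^ 2)) ∘ ((MeasurableEquiv.toLp 2 (Fin d → ℝ)).symm).symm)
      = fun x : Fin d → ℝ => ∏ i, rexp (-b * x i ^ 2) := by
    funext x; exact gauss_prod d b x
  rw [this]
  exact Integrable.fintype_prod (f := fun i (v:ℝ) => rexp (-b * v ^ 2))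
    (fun i => integrable_exp_neg_mul_sq hb)

lemma integral_gauss_eucl (d : ℕ) {b : ℝ} (hb : 0 < b) :
    ∫ v : Vec d, rexp (-b * ‖v‖ ^ 2) = (π / b) ^ ((d : ℝ) / 2) := by
  rw [GaussianFourier.integral_rexp_neg_mul_sq_norm hb]
  simp

lemma mom_eucl (d : ℕ) {b : ℝ} (hb : 0 < b) :
    ∫ v : Vec d, ‖v‖ ^ 2 * rexp (-b * ‖v‖ ^ 2)
      = (d : ℝ) * (2 * b)⁻¹ * ∫ v : Vec d, rexp (-b * ‖v‖ ^ 2) := by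
  classical
  set g : ℝ → ℝ := fun x => rexp (-b * x ^ 2) with hg
  set g2 : ℝ → ℝ := fun x => x ^ 2 * rexp (-b * x ^ 2) with hg2
  have hI0 : Integrable g := integrable_exp_neg_mul_sq hb
  have hI2 : Integrable g2 := by
    have := integrable_rpow_mul_exp_neg_mul_sq hb (s := 2) (by norm_num)
    exact this.congr (Filter.Eventually.of_forall fun x => by simp [hg2, Real.rpow_two])
  rw [euclid_integral_eq (fun v : Vec d => ‖v‖ ^ 2 * rexp (-b * ‖v‖ ^ 2)),
      euclid_integral_eq (fun v : Vec d => rexp (-b * ‖v‖ ^ 2))]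
  have hprod : ∀ x : Fin d → ℝ,
      rexp (-b * ‖((MeasurableEquiv.toLp 2 (Fin d → ℝ)).symm).symm x‖ ^ 2)
        = ∏ i, g (x i) := gauss_prod d b
  have hkey : ∀ (i : Fin d) (x : Fin d → ℝ),
      x i ^ 2 * ∏ j, g (x j) = ∏ j, (if j = i then g2 else g) (x j) := by
    intro i x
    have herase : ∏ j ∈ Finset.univ.erase i, (if j = i then g2 else g) (x j)
        = ∏ j ∈ Finset.univ.erase i, g (x j) :=
      Finset.prod_congr rfl fun j hj => by rw [if_neg (Finset.ne_of_mem_erase hj)]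
    rw [← Finset.mul_prod_erase Finset.univ (fun j => (if j = i then g2 else g) (x j))
        (Finset.mem_univ i),
      ← Finset.mul_prod_erase Finset.univ (fun j => g (x j)) (Finset.mem_univ i),
      herase]
    simp only [eq_self_iff_true, if_true, hg2]
    ring
  have hL : ∫ x : Fin d → ℝ,
      ‖((MeasurableEquiv.toLp 2 (Fin d → ℝ)).symm).symm x‖ ^ 2
        * rexp (-b * ‖((MeasurableEquiv.toLp 2 (Fin d → ℝ)).symm).symm x‖ ^ 2)
      = ∑ i : Fin d, ∫ x : Fin d → ℝ, ∏ j, (if j = i then g2 else g) (x j) := by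
    rw [← integral_finset_sum _ (fun (i : Fin d) _ =>
      (Integrable.fintype_prod (f := fun j (v:ℝ) => (if j = i then g2 else g) v) (μ := fun _ => volume)
        (fun j => by by_cases h : j = i <;> simp [h, hI0, hI2]) :
        Integrable (fun x : Fin d → ℝ => ∏ j, (if j = i then g2 else g) (x j))))]
    congr 1
    funext x
    rw [hprod x, euclid_norm_sq]
    rw [Finset.sum_mul]
    refine Finset.sum_congr rfl fun i _ => ?_
    rw [← hkey i x]
    congr 1
  rw [hL]
  have hterm : ∀ i : Fin d, ∫ x : Fin d → ℝ, ∏ j, (if j = i then g2 else g) (x j)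
      = (2 * b)⁻¹ * ∫ x : Fin d → ℝ, ∏ j, g (x j) := by
    intro i
    rw [integral_fintype_prod_volume_eq_prod (fun j (v:ℝ) => (if j = i then g2 else g) v),
        integral_fintype_prod_volume_eq_prod (fun _ (v:ℝ) => g v)]
    have herase : ∏ j ∈ Finset.univ.erase i, (∫ v : ℝ, (if j = i then g2 else g) v)
        = ∏ j ∈ Finset.univ.erase i, ∫ v : ℝ, g v :=
      Finset.prod_congr rfl fun j hj => by rw [if_neg (Finset.ne_of_mem_erase hj)]
    rw [← Finset.mul_prod_erase Finset.univ (fun j => ∫ v : ℝ, (if j = i then g2 else g) v)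
        (Finset.mem_univ i),
      ← Finset.mul_prod_erase Finset.univ (fun j => ∫ v : ℝ, g v) (Finset.mem_univ i),
      herase]
    simp only [eq_self_iff_true, if_true]
    rw [show (∫ v : ℝ, g2 v) = (2*b)⁻¹ * ∫ v : ℝ, g v from gauss1d_sq hb]
    ring
  rw [Finset.sum_congr rfl fun i _ => hterm i, Finset.sum_const, Finset.card_univ]
  have : ∫ x : Fin d → ℝ,
      rexp (-b * ‖((MeasurableEquiv.toLp 2 (Fin d → ℝ)).symm).symm x‖ ^ 2)
      = ∫ x : Fin d → ℝ, ∏ j, g (x j) := by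
    congr 1; funext x; exact hprod x
  rw [this]
  simp [nsmul_eq_mul, Fintype.card_fin, mul_assoc]

lemma integrable_sq_gauss_eucl (d : ℕ) {b : ℝ} (hb : 0 < b) :
    Integrable (fun v : Vec d => ‖v‖ ^ 2 * rexp (-b * ‖v‖ ^ 2)) := by
  have hbd : ∀ v : Vec d, ‖‖v‖ ^ 2 * rexp (-b * ‖v‖ ^ 2)‖
      ≤ (2/b) * rexp (-(b/2) * ‖v‖ ^ 2) := by
    intro v
    set u := ‖v‖ ^ 2 with hu
    have hu0 : (0:ℝ) ≤ u := sq_nonneg _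
    have h1 : u ≤ (2/b) * rexp ((b/2) * u) := by
      have h2 : (b/2) * u ≤ rexp ((b/2) * u) := by
        have := Real.add_one_le_exp ((b/2) * u); linarith
      calc u = (2/b) * ((b/2) * u) := by field_simp
        _ ≤ (2/b) * rexp ((b/2) * u) := by
            apply mul_le_mul_of_nonneg_left h2; positivity
    calc ‖u * rexp (-b * u)‖ = u * rexp (-b * u) := abs_of_nonneg (by positivity)
      _ ≤ ((2/b) * rexp ((b/2) * u)) * rexp (-b * u) :=
          mul_le_mul_of_nonneg_right h1 (Real.exp_pos _).le
      _ = (2/b) * rexp (-(b/2) * u) := by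
          rw [mul_assoc, ← Real.exp_add]; congr 1; ring
  refine Integrable.mono' ((integrable_gauss_eucl d (half_pos hb)).const_mul (2/b)) ?_
    (Filter.Eventually.of_forall hbd)
  exact ((continuous_norm.pow 2).mul
    (Real.continuous_exp.comp (continuous_const.mul (continuous_norm.pow 2)))).aestronglyMeasurable

lemma inner_gauss_zero (d : ℕ) (a : Vec d) (b : ℝ) :
    ∫ v : Vec d, ⟪a, v⟫ * rexp (-b * ‖v‖ ^ 2) = 0 := by
  have h := integral_neg_eq_self (fun v : Vec d => ⟪a, v⟫ * rexp (-b * ‖v‖ ^ 2)) volume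
  simp only [inner_neg_right, norm_neg, neg_mul, integral_neg] at h
  simp only [neg_mul]
  linarith

lemma integrable_inner_gauss (d : ℕ) (a : Vec d) {b : ℝ} (hb : 0 < b) :
    Integrable (fun v : Vec d => ⟪a, v⟫ * rexp (-b * ‖v‖ ^ 2)) := by
  refine Integrable.mono' (((integrable_gauss_eucl d hb).const_mul ‖a‖).add
    ((integrable_sq_gauss_eucl d hb).const_mul ‖a‖)) ?_
    (Filter.Eventually.of_forall fun v => ?_)
  · exact ((continuous_inner.comp (continuous_const.prodMk continuous_id)).mul
      (Real.continuous_exp.comp (continuous_const.mul (continuous_norm.pow 2)))).aestronglyMeasurable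
  · simp only [Pi.add_apply]
    have h1 : |⟪a, v⟫| ≤ ‖a‖ * ‖v‖ := abs_real_inner_le_norm a v
    have h2 : ‖v‖ ≤ 1 + ‖v‖ ^ 2 := by nlinarith [norm_nonneg v, sq_nonneg (‖v‖ - 1)]
    have he : (0:ℝ) < rexp (-b * ‖v‖ ^ 2) := Real.exp_pos _
    have : ‖⟪a, v⟫ * rexp (-b * ‖v‖ ^ 2)‖ = |⟪a, v⟫| * rexp (-b * ‖v‖ ^ 2) := by
      rw [norm_mul, Real.norm_eq_abs, Real.norm_eq_abs, abs_of_pos he]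
    rw [this]
    have hav : (0:ℝ) ≤ ‖a‖ := norm_nonneg _
    nlinarith [mul_le_mul_of_nonneg_right h1 he.le,
      mul_le_mul_of_nonneg_right (mul_le_mul_of_nonneg_left h2 hav) he.le]

lemma rpow_le_one_add_sq {x : ℝ} (hx : 0 ≤ x) {c : ℝ} (hc1 : 0 < c) (hc2 : c ≤ 2) :
    x ^ c ≤ 1 + x ^ 2 := by
  rcases le_total x 1 with h | h
  · have := Real.rpow_le_one hx h hc1.le
    nlinarith [sq_nonneg x]
  · have h2 : x ^ c ≤ x ^ (2:ℝ) := Real.rpow_le_rpow_of_exponent_le h hc2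
    rw [Real.rpow_two] at h2
    nlinarith

lemma integrable_rpow_gauss (d : ℕ) {b c : ℝ} (hb : 0 < b) (hc1 : 0 < c) (hc2 : c ≤ 2) :
    Integrable (fun v : Vec d => ‖v‖ ^ c * rexp (-b * ‖v‖ ^ 2)) := by
  refine Integrable.mono' ((integrable_gauss_eucl d hb).add
    (integrable_sq_gauss_eucl d hb)) ?_ (Filter.Eventually.of_forall fun v => ?_)
  · exact ((continuous_norm.rpow_const fun v => Or.inr hc1.le).mul
      (Real.continuous_exp.comp (continuous_const.mul (continuous_norm.pow 2)))).aestronglyMeasurable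
  · simp only [Pi.add_apply]
    have he : (0:ℝ) < rexp (-b * ‖v‖ ^ 2) := Real.exp_pos _
    have h0 : (0:ℝ) ≤ ‖v‖ ^ c := Real.rpow_nonneg (norm_nonneg _) _
    have : ‖‖v‖ ^ c * rexp (-b * ‖v‖ ^ 2)‖ = ‖v‖ ^ c * rexp (-b * ‖v‖ ^ 2) := by
      rw [norm_mul, Real.norm_eq_abs, Real.norm_eq_abs, abs_of_nonneg h0, abs_of_pos he]
    rw [this]
    have := rpow_le_one_add_sq (norm_nonneg v) hc1 hc2
    nlinarith [mul_le_mul_of_nonneg_right this he.le]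

lemma young_rpow_bound {A c θ : ℝ} (hA : 0 ≤ A) (hc : 0 < c) (hθ1 : 0 < θ) (hθ2 : θ ≤ 1) :
    A ^ θ ≤ θ * c ^ (θ - 1) * A + (1 - θ) * c ^ θ := by
  have hg := Real.geom_mean_le_arith_mean2_weighted (w₁ := θ) (w₂ := 1-θ) (p₁ := A) (p₂ := c)
    hθ1.le (by linarith) hA hc.le (by ring)
  have hcpow : (0:ℝ) < c ^ (1 - θ) := Real.rpow_pos_of_pos hc _
  have key : A ^ θ = (A ^ θ * c ^ (1-θ)) / c ^ (1-θ) := by field_simp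
  rw [key, div_le_iff₀ hcpow]
  calc A ^ θ * c ^ (1-θ) ≤ θ * A + (1-θ) * c := hg
    _ = (θ * c ^ (θ-1) * A + (1-θ) * c ^ θ) * c ^ (1-θ) := by
        have e1 : c ^ (θ-1) * c ^ (1-θ) = 1 := by
          rw [← Real.rpow_add hc]; norm_num
        have e2 : c ^ θ * c ^ (1-θ) = c := by
          rw [← Real.rpow_add hc]; norm_num
        calc θ * A + (1-θ) * c
            = θ * A * (c ^ (θ-1) * c ^ (1-θ)) + (1-θ) * (c ^ θ * c ^ (1-θ)) := by
              rw [e1, e2]; ring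
          _ = (θ * c ^ (θ-1) * A + (1-θ) * c ^ θ) * c ^ (1-θ) := by ring
  
lemma inner_scoreFn (d : ℕ) (p : Vec d → ℝ) (hpos : ∀ x, 0 < p x)
    (hC1 : ContDiff ℝ 1 p) (x v : Vec d) :
    ⟪scoreFn d p x, v⟫ = (p x)⁻¹ * (fderiv ℝ p x v) := by
  have hdiff : DifferentiableAt ℝ p x := (hC1.differentiable one_ne_zero).differentiableAt
  have hlog : HasFDerivAt (fun w => Real.log (p w)) ((p x)⁻¹ • fderiv ℝ p x) x :=
    (Real.hasDerivAt_log (hpos x).ne').comp_hasFDerivAt x hdiff.hasFDerivAt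
  have : ⟪scoreFn d p x, v⟫ = fderiv ℝ (fun w => Real.log (p w)) x v := by
    rw [scoreFn, gradient, InnerProductSpace.toDual_symm_apply]
  rw [this, hlog.fderiv]
  simp

lemma log_lower (d : ℕ) (p : Vec d → ℝ) (L β : ℝ)
    (hpos : ∀ x, 0 < p x) (hC1 : ContDiff ℝ 1 p)
    (hβ : 0 < β) (hL : 0 ≤ L)
    (hholder : ∀ x y : Vec d, ‖scoreFn d p x - scoreFn d p y‖ ≤ L * ‖x - y‖ ^ β)
    (y z : Vec d) :
    Real.log (p y) - ⟪scoreFn d p y, z⟫ - L * ‖z‖ ^ (β + 1) ≤ Real.log (p (y - z)) := by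
  have hdiff : ∀ x, DifferentiableAt ℝ p x := fun x => (hC1.differentiable one_ne_zero).differentiableAt
  set s : Vec d → Vec d := scoreFn d p with hs
  set h : ℝ → ℝ := fun u => Real.log (p (y - u • z)) + u * ⟪s y, z⟫ with hh
  have hderiv : ∀ u : ℝ, HasDerivAt h (⟪s y, z⟫ - ⟪s (y - u • z), z⟫) u := by
    intro u
    have hline : HasDerivAt (fun u : ℝ => y - u • z) (-z) u := by
      have h1 : HasDerivAt (fun u : ℝ => u • z) ((1:ℝ) • z) u := (hasDerivAt_id u).smul_const z
      simpa using h1.const_sub y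
    have hp' : HasDerivAt (fun u : ℝ => p (y - u • z)) (fderiv ℝ p (y - u • z) (-z)) u :=
      (hdiff _).hasFDerivAt.comp_hasDerivAt u hline
    have hlog : HasDerivAt (fun u : ℝ => Real.log (p (y - u • z)))
        ((p (y - u • z))⁻¹ * fderiv ℝ p (y - u • z) (-z)) u :=
      by have := hp'.log (hpos (y - u • z)).ne'; rw [div_eq_inv_mul] at this; exact this
    have hlin : HasDerivAt (fun u : ℝ => u * ⟪s y, z⟫) ⟪s y, z⟫ u := by
      simpa using (hasDerivAt_id u).mul_const ⟪s y, z⟫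
    have := hlog.add hlin
    refine this.congr_deriv ?_
    rw [← inner_scoreFn d p hpos hC1 (y - u • z) (-z), ← hs, inner_neg_right]
    ring
  have hbound : ∀ u ∈ Icc (0:ℝ) 1,
      ‖⟪s y, z⟫ - ⟪s (y - u • z), z⟫‖ ≤ L * ‖z‖ ^ β * ‖z‖ := by
    intro u hu
    have h1 : ⟪s y, z⟫ - ⟪s (y - u • z), z⟫ = ⟪s y - s (y - u • z), z⟫ := by
      rw [inner_sub_left]
    rw [h1, Real.norm_eq_abs]
    calc |⟪s y - s (y - u • z), z⟫| ≤ ‖s y - s (y - u • z)‖ * ‖z‖ :=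
          abs_real_inner_le_norm _ _
      _ ≤ (L * ‖y - (y - u • z)‖ ^ β) * ‖z‖ :=
          mul_le_mul_of_nonneg_right (hholder _ _) (norm_nonneg _)
      _ ≤ (L * ‖z‖ ^ β) * ‖z‖ := by
          refine mul_le_mul_of_nonneg_right (mul_le_mul_of_nonneg_left ?_ hL) (norm_nonneg _)
          refine Real.rpow_le_rpow (norm_nonneg _) ?_ hβ.le
          have : y - (y - u • z) = u • z := by abel
          rw [this, norm_smul]
          have : ‖(u:ℝ)‖ ≤ 1 := by
            rw [Real.norm_eq_abs, abs_of_nonneg hu.1]; exact hu.2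
          nlinarith [norm_nonneg z, this]
  have hmvt := Convex.norm_image_sub_le_of_norm_hasDerivWithin_le
    (f := h) (f' := fun u => ⟪s y, z⟫ - ⟪s (y - u • z), z⟫)
    (fun u _ => (hderiv u).hasDerivWithinAt) hbound (convex_Icc 0 1)
    (left_mem_Icc.mpr zero_le_one) (right_mem_Icc.mpr zero_le_one)
  have h1 : h 1 = Real.log (p (y - z)) + ⟪s y, z⟫ := by simp [hh]
  have h0 : h 0 = Real.log (p y) := by simp [hh]
  have hzz : ‖z‖ ^ β * ‖z‖ = ‖z‖ ^ (β + 1) := by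
    rcases eq_or_ne ‖z‖ 0 with hz | hz
    · rw [hz, Real.zero_rpow hβ.ne', Real.zero_rpow (by linarith), zero_mul]
    · rw [Real.rpow_add_one hz]
  rw [h1, h0] at hmvt
  simp only [norm_sub_rev, Real.norm_eq_abs, sub_zero, norm_one, mul_one] at hmvt
  have := abs_le.mp hmvt
  have hle : Real.log (p y) - (Real.log (p (y - z)) + ⟪s y, z⟫) ≤ L * ‖z‖ ^ β * ‖z‖ := this.2
  rw [mul_assoc, hzz] at hle
  linarith

end AuxLemmas

/-- Log-ratio bound for a density with `(L, β)`-Hölder score and its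
Gaussian smoothing: `log(p(y)/p_t(y)) ≤ L (td)^{(1+β)/2}`. -/
theorem log_ratio_bound_holder (d : ℕ) (p : Vec d → ℝ) (L β : ℝ)
    (hpos : ∀ x, 0 < p x) (hC1 : ContDiff ℝ 1 p) (hint : ∫ x, p x = 1)
    (hβ : 0 < β) (hβ1 : β ≤ 1) (hL : 0 ≤ L)
    (hholder : ∀ x y : Vec d, ‖scoreFn d p x - scoreFn d p y‖ ≤ L * ‖x - y‖ ^ β) :
    ∀ t : ℝ, 0 < t → ∀ y : Vec d,
      Real.log (p y / densConvD d p t y) ≤ L * (t * (d : ℝ)) ^ ((1 + β) / 2) := by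
  intro t ht y
  have h2πt : (0:ℝ) < 2 * π * t := by positivity
  set bb : ℝ := (2*t)⁻¹ with hbb
  have hbbpos : 0 < bb := by positivity
  set K : ℝ := (2*π*t) ^ (-(d:ℝ)/2) with hK
  have hKpos : 0 < K := Real.rpow_pos_of_pos h2πt _
  set EE : Vec d → ℝ := fun z => rexp (-bb * ‖z‖^2) with hEE
  have hEEpos : ∀ z, 0 < EE z := fun z => Real.exp_pos _
  have hgauss : ∀ z : Vec d, gaussD d t 0 z = K * EE z := by
    intro z
    rw [gaussD, sub_zero, hEE]
    congr 2
    rw [hbb]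
    field_simp
  set a : Vec d := scoreFn d p y with ha
  -- integrability of the convolution integrand
  have hp_int : Integrable p := by
    by_contra hcon
    rw [integral_undef hcon] at hint
    norm_num at hint
  have hpt_int : Integrable (fun z : Vec d => p (y - z)) := by
    have hmp : MeasurePreserving (fun z : Vec d => y - z) volume volume :=
      Measure.measurePreserving_sub_left volume y
    have hemb : MeasurableEmbedding (fun z : Vec d => y - z) :=
      (MeasurableEquiv.subLeft y).measurableEmbedding
    exact (hmp.integrable_comp_emb hemb).mpr hp_int
  have hgauss_cont : Continuous (fun z : Vec d => gaussD d t 0 z) := by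
    have : (fun z : Vec d => gaussD d t 0 z) = fun z => K * EE z := funext hgauss
    rw [this, hEE]
    exact continuous_const.mul
      (Real.continuous_exp.comp (continuous_const.mul (continuous_norm.pow 2)))
  have hconv_int : Integrable (fun z : Vec d => p (y - z) * gaussD d t 0 z) := by
    have := hpt_int.bdd_mul hgauss_cont.aestronglyMeasurable (c := K) (Filter.Eventually.of_forall fun z => by
      rw [hgauss z, Real.norm_eq_abs, abs_of_pos (by positivity)]
      have : EE z ≤ 1 := by
        rw [hEE]
        apply Real.exp_le_one_iff.mpr
        have : (0:ℝ) ≤ bb * ‖z‖^2 := by positivity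
        linarith
      nlinarith)
    exact this.congr (Filter.Eventually.of_forall fun z => mul_comm _ _)
  -- key pointwise bound
  set F : Vec d → ℝ := fun z => -⟪a, z⟫ - L * ‖z‖ ^ (β+1) with hF
  have hkey : ∀ z : Vec d, p y * (rexp (F z) * gaussD d t 0 z)
      ≤ p (y - z) * gaussD d t 0 z := by
    intro z
    have hlog := log_lower d p L β hpos hC1 hβ hL hholder y z
    have h1 : p y * rexp (F z) ≤ p (y - z) := by
      have h2 : p y * rexp (F z) = rexp (Real.log (p y) - ⟪a, z⟫ - L * ‖z‖ ^ (β+1)) := by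
        rw [show Real.log (p y) - ⟪a, z⟫ - L * ‖z‖ ^ (β+1)
            = Real.log (p y) + (-⟪a, z⟫ - L * ‖z‖ ^ (β+1)) by ring,
          Real.exp_add, Real.exp_log (hpos y), hF]
      rw [h2]
      calc rexp (Real.log (p y) - ⟪a, z⟫ - L * ‖z‖ ^ (β+1))
          ≤ rexp (Real.log (p (y - z))) := Real.exp_le_exp.mpr hlog
        _ = p (y - z) := Real.exp_log (hpos _)
    have hg0 : 0 ≤ gaussD d t 0 z := by rw [hgauss z]; positivity
    calc p y * (rexp (F z) * gaussD d t 0 z) = (p y * rexp (F z)) * gaussD d t 0 z := by ring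
      _ ≤ p (y - z) * gaussD d t 0 z := mul_le_mul_of_nonneg_right h1 hg0
  -- basic gaussian integrals
  have hEE_int : Integrable EE := integrable_gauss_eucl d hbbpos
  have hKEE_int : Integrable (fun z : Vec d => K * EE z) := hEE_int.const_mul K
  have hKI0 : K * ∫ z : Vec d, EE z = 1 := by
    rw [hEE, integral_gauss_eucl d hbbpos, hK]
    have hπbb : π / bb = 2 * π * t := by
      rw [hbb]; field_simp
    rw [hπbb, ← Real.rpow_add h2πt, show (-(d:ℝ)/2 + (d:ℝ)/2) = 0 by ring, Real.rpow_zero]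
  have hIφ : ∫ z : Vec d, K * EE z = 1 := by
    rw [integral_const_mul, hKI0]
  have hM2 : ∫ z : Vec d, ‖z‖^2 * (K * EE z) = t * d := by
    have : (fun z : Vec d => ‖z‖^2 * (K * EE z)) = fun z => K * (‖z‖^2 * EE z) := by
      funext z; ring
    rw [this, integral_const_mul, hEE, mom_eucl d hbbpos]
    have h2bb : (2 * bb)⁻¹ = t := by rw [hbb]; field_simp
    rw [h2bb]
    have := hKI0
    rw [hEE] at this
    calc K * ((d:ℝ) * t * ∫ v : Vec d, rexp (-bb * ‖v‖^2))
        = t * (d:ℝ) * (K * ∫ v : Vec d, rexp (-bb * ‖v‖^2)) := by ring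
      _ = t * d := by rw [this]; ring
  have hM1 : ∫ z : Vec d, ⟪a, z⟫ * (K * EE z) = 0 := by
    have : (fun z : Vec d => ⟪a, z⟫ * (K * EE z)) = fun z => K * (⟪a, z⟫ * EE z) := by
      funext z; ring
    rw [this, integral_const_mul, hEE, inner_gauss_zero d a bb, mul_zero]
  have hsqKEE_int : Integrable (fun z : Vec d => ‖z‖^2 * (K * EE z)) := by
    have := (integrable_sq_gauss_eucl d hbbpos).const_mul K
    exact this.congr (Filter.Eventually.of_forall fun z => by rw [hEE]; ring)
  have hinnerKEE_int : Integrable (fun z : Vec d => ⟪a, z⟫ * (K * EE z)) := by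
    have := (integrable_inner_gauss d a hbbpos).const_mul K
    exact this.congr (Filter.Eventually.of_forall fun z => by rw [hEE]; ring)
  have hrpowKEE_int : Integrable (fun z : Vec d => ‖z‖ ^ (β+1) * (K * EE z)) := by
    have := (integrable_rpow_gauss d hbbpos (show (0:ℝ) < β+1 by linarith)
      (by linarith)).const_mul K
    exact this.congr (Filter.Eventually.of_forall fun z => by rw [hEE]; ring)
  set Mβ : ℝ := ∫ z : Vec d, ‖z‖ ^ (β+1) * (K * EE z) with hMβ
  have hMβ_nonneg : 0 ≤ Mβ := by
    rw [hMβ]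
    apply integral_nonneg
    intro z
    have := hEEpos z
    have : (0:ℝ) ≤ ‖z‖ ^ (β+1) := Real.rpow_nonneg (norm_nonneg _) _
    positivity
  -- Young bound on Mβ
  have hMβ_le : Mβ ≤ (t * d) ^ ((1+β)/2) := by
    rcases Nat.eq_zero_or_pos d with hd | hd
    · have hMβ0 : Mβ = 0 := by
        rw [hMβ]
        have hzz : ∀ z : Vec d, ‖z‖ ^ (β+1) * (K * EE z) = 0 := by
          intro z
          have hz0 : ‖z‖ = 0 := by
            have : z = 0 := by subst hd; ext i; exact i.elim0
            rw [this, norm_zero]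
          rw [hz0, Real.zero_rpow (show β + 1 ≠ 0 by linarith), zero_mul]
        simp only [hzz, integral_zero]
      rw [hMβ0, hd]
      rw [show ((0:ℕ):ℝ) = 0 by norm_num, mul_zero,
        Real.zero_rpow (show ((1+β)/2 : ℝ) ≠ 0 by positivity)]
    · have hdpos : (0:ℝ) < d := by exact_mod_cast hd
      have htd : 0 < t * d := by positivity
      set θ : ℝ := (1+β)/2 with hθ
      have hθ1 : 0 < θ := by rw [hθ]; linarith
      have hθ2 : θ ≤ 1 := by rw [hθ]; linarith
      have hpw : ∀ z : Vec d, ‖z‖ ^ (β+1) * (K * EE z)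
          ≤ θ * (t*d) ^ (θ-1) * (‖z‖^2 * (K * EE z)) + (1-θ) * (t*d) ^ θ * (K * EE z) := by
        intro z
        have hy := young_rpow_bound (sq_nonneg ‖z‖) htd hθ1 hθ2
        have heq : (‖z‖^2 : ℝ) ^ θ = ‖z‖ ^ (β+1) := by
          rw [← Real.rpow_two, ← Real.rpow_mul (norm_nonneg z),
            show (2:ℝ) * θ = β + 1 by rw [hθ]; ring]
        rw [heq] at hy
        have hKE : 0 ≤ K * EE z := by have := hEEpos z; positivity
        calc ‖z‖ ^ (β+1) * (K * EE z)
            ≤ (θ * (t*d) ^ (θ-1) * ‖z‖^2 + (1-θ) * (t*d) ^ θ) * (K * EE z) :=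
              mul_le_mul_of_nonneg_right hy hKE
          _ = θ * (t*d) ^ (θ-1) * (‖z‖^2 * (K * EE z)) + (1-θ) * (t*d) ^ θ * (K * EE z) := by
              ring
      have hint2 : Integrable (fun z : Vec d =>
          θ * (t*d) ^ (θ-1) * (‖z‖^2 * (K * EE z)) + (1-θ) * (t*d) ^ θ * (K * EE z)) :=
        (hsqKEE_int.const_mul _).add (hKEE_int.const_mul _)
      have := integral_mono hrpowKEE_int hint2 hpw
      rw [integral_add (hsqKEE_int.const_mul _) (hKEE_int.const_mul _),
        integral_const_mul, integral_const_mul, hM2, hIφ] at this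
      rw [hMβ]
      calc ∫ z : Vec d, ‖z‖ ^ (β+1) * (K * EE z)
          ≤ θ * (t*d) ^ (θ-1) * (t*d) + (1-θ) * (t*d) ^ θ * 1 := this
        _ = (t*d) ^ θ := by
            have : (t*d) ^ (θ-1) * (t*d) = (t*d) ^ θ := by
              rw [show (t*d : ℝ) ^ (θ-1) * (t*d) = (t*d) ^ (θ-1) * (t*d) ^ (1:ℝ) by
                rw [Real.rpow_one], ← Real.rpow_add htd]
              norm_num
            rw [mul_assoc, this]
            ring
  -- Jensen via tangent line
  have hFKEE_int : Integrable (fun z : Vec d => F z * (K * EE z)) := by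
    have : (fun z : Vec d => F z * (K * EE z))
        = fun z => -(⟪a, z⟫ * (K * EE z)) - L * (‖z‖ ^ (β+1) * (K * EE z)) := by
      funext z; rw [hF]; ring
    rw [this]
    exact hinnerKEE_int.neg.sub (hrpowKEE_int.const_mul L)
  have hcval : ∫ z : Vec d, F z * (K * EE z) = -(L * Mβ) := by
    have : (fun z : Vec d => F z * (K * EE z))
        = fun z => -(⟪a, z⟫ * (K * EE z)) - L * (‖z‖ ^ (β+1) * (K * EE z)) := by
      funext z; rw [hF]; ring
    have hneg : Integrable (fun z : Vec d => -(⟪a, z⟫ * (K * EE z))) := hinnerKEE_int.neg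
    have hLr : Integrable (fun z : Vec d => L * (‖z‖ ^ (β+1) * (K * EE z))) :=
      hrpowKEE_int.const_mul L
    rw [this, integral_sub hneg hLr, integral_neg, hM1,
      integral_const_mul, ← hMβ]
    ring
  set c : ℝ := -(L * Mβ) with hc
  have hexpF_int : Integrable (fun z : Vec d => rexp (F z) * (K * EE z)) := by
    refine Integrable.mono' (hconv_int.const_mul (p y)⁻¹) ?_
      (Filter.Eventually.of_forall fun z => ?_)
    · have hFc : Continuous F := by
        rw [hF]
        exact ((continuous_inner.comp (continuous_const.prodMk continuous_id)).neg).sub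
          (continuous_const.mul (continuous_norm.rpow_const fun v => Or.inr (by linarith)))
      exact ((Real.continuous_exp.comp hFc).mul
        (continuous_const.mul
          (Real.continuous_exp.comp (continuous_const.mul (continuous_norm.pow 2))))).aestronglyMeasurable
    · have hKE : 0 < K * EE z := by have := hEEpos z; positivity
      have hnorm : ‖rexp (F z) * (K * EE z)‖ = rexp (F z) * (K * EE z) := by
        rw [Real.norm_eq_abs, abs_of_pos (by positivity)]
      rw [hnorm]
      have := hkey z
      rw [hgauss z] at this
      have hpy : 0 < p y := hpos y
      calc rexp (F z) * (K * EE z) = (p y)⁻¹ * (p y * (rexp (F z) * (K * EE z))) := by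
            field_simp
        _ ≤ (p y)⁻¹ * (p (y - z) * (K * EE z)) := by
            apply mul_le_mul_of_nonneg_left this (by positivity)
        _ = (p y)⁻¹ * (p (y - z) * gaussD d t 0 z) := by rw [hgauss z]
  have htangent : ∀ z : Vec d, rexp c * ((1 + (F z - c)) * (K * EE z))
      ≤ rexp (F z) * (K * EE z) := by
    intro z
    have h1 : (F z - c) + 1 ≤ rexp (F z - c) := Real.add_one_le_exp _
    have hKE : 0 ≤ K * EE z := by have := hEEpos z; positivity
    have h2 : rexp c * (1 + (F z - c)) ≤ rexp c * rexp (F z - c) := by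
      apply mul_le_mul_of_nonneg_left (by linarith) (Real.exp_pos c).le
    have h3 : rexp c * rexp (F z - c) = rexp (F z) := by
      rw [← Real.exp_add]; congr 1; ring
    calc rexp c * ((1 + (F z - c)) * (K * EE z)) = (rexp c * (1 + (F z - c))) * (K * EE z) := by
          ring
      _ ≤ rexp (F z) * (K * EE z) := by
          rw [← h3]
          exact mul_le_mul_of_nonneg_right h2 hKE
  have htan_int : Integrable (fun z : Vec d => rexp c * ((1 + (F z - c)) * (K * EE z))) := by
    have : (fun z : Vec d => rexp c * ((1 + (F z - c)) * (K * EE z)))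
        = fun z => rexp c * (1 - c) * (K * EE z) + rexp c * (F z * (K * EE z)) := by
      funext z; ring
    rw [this]
    exact (hKEE_int.const_mul _).add (hFKEE_int.const_mul _)
  have hJ : rexp c ≤ ∫ z : Vec d, rexp (F z) * (K * EE z) := by
    have hval : ∫ z : Vec d, rexp c * ((1 + (F z - c)) * (K * EE z)) = rexp c := by
      have : (fun z : Vec d => rexp c * ((1 + (F z - c)) * (K * EE z)))
          = fun z => rexp c * (1 - c) * (K * EE z) + rexp c * (F z * (K * EE z)) := by
        funext z; ring
      rw [this, integral_add (hKEE_int.const_mul _) ((hFKEE_int).const_mul _),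
        integral_const_mul (rexp c * (1 - c)) (fun z : Vec d => K * EE z),
        integral_const_mul (rexp c) (fun z : Vec d => F z * (K * EE z)), hIφ, hcval]
      ring
    rw [← hval]
    exact integral_mono htan_int hexpF_int htangent
  -- lower bound on the convolution
  have hlow : p y * rexp c ≤ densConvD d p t y := by
    rw [densConvD]
    calc p y * rexp c ≤ p y * ∫ z : Vec d, rexp (F z) * (K * EE z) :=
          mul_le_mul_of_nonneg_left hJ (hpos y).le
      _ = ∫ z : Vec d, p y * (rexp (F z) * (K * EE z)) := (integral_const_mul _ _).symm
      _ ≤ ∫ z : Vec d, p (y - z) * gaussD d t 0 z := by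
          refine integral_mono (hexpF_int.const_mul (p y)) hconv_int fun z => ?_
          have := hkey z
          rw [hgauss z] at this ⊢
          exact this
  have hpt_pos : 0 < densConvD d p t y :=
    lt_of_lt_of_le (mul_pos (hpos y) (Real.exp_pos c)) hlow
  rw [Real.log_div (hpos y).ne' hpt_pos.ne']
  have hloglow : Real.log (p y * rexp c) ≤ Real.log (densConvD d p t y) :=
    Real.log_le_log (mul_pos (hpos y) (Real.exp_pos c)) hlow
  rw [Real.log_mul (hpos y).ne' (Real.exp_pos c).ne', Real.log_exp] at hloglow
  have hfin : L * Mβ ≤ L * (t * d) ^ ((1+β)/2) := mul_le_mul_of_nonneg_left hMβ_le hL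
  have : Real.log (p y) - Real.log (densConvD d p t y) ≤ -c := by linarith
  rw [hc] at this
  linarith
end
end
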